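/- arXiv:2002.11865 — 7 statements merged into one kernel-verified Lean document; each statement's English description precedes it below -/
import Mathlib

section
/- Let 𝓧 ⊆ L¹ contain all simple random variables and let ρ: 𝓧 → (−∞, ∞] be dilatation monotone with the Fatou property. Define ρ̄(X) = sup_{π ∈ Π} ρ(E[X|π]) for X ∈ L¹. Then ρ̄ agrees with ρ on 𝓧, takes values in (−∞, ∞], is dilatation monotone, and is ‖·‖₁ lower semicontinuous on L¹. -/
open MeasureTheory Filter Topology

variable {Ω : Type*} [MeasurableSpace Ω]

/-- A finite measurable partition of `Ω` whose members have positive measure. -/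
structure FinPartition (μ : Measure Ω) where
  parts : Finset (Set Ω)
  measSet : ∀ A ∈ parts, MeasurableSet A
  pairwiseDisj : ∀ A ∈ parts, ∀ B ∈ parts, A ≠ B → Disjoint A B
  cover : ⋃ A ∈ parts, A = Set.univ
  pos : ∀ A ∈ parts, 0 < μ A

/-- Conditional expectation of `X` with respect to the finite partition `π`:
`E[X|π] = ∑_{A ∈ π} (∫_A X dμ / μ(A)) 1_A`. -/
noncomputable def pCondExp (μ : Measure Ω) (π : FinPartition μ) (X : Ω → ℝ) : Ω → ℝ :=
  fun ω => ∑ A ∈ π.parts, Set.indicator A (fun _ => (∫ x in A, X x ∂μ) / (μ A).toReal) ω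

/-- A simple random variable. -/
def IsSimpleRV (X : Ω → ℝ) : Prop := Measurable X ∧ (Set.range X).Finite

/-- Membership in the smallest ideal of `L¹` generated by `S`. -/
def MemIdeal (μ : Measure Ω) (S : Set (Ω → ℝ)) (X : Ω → ℝ) : Prop :=
  ∃ (n : ℕ) (Y : Fin n → Ω → ℝ) (l : Fin n → ℝ),
    (∀ i, Y i ∈ S) ∧ (∀ i, 0 ≤ l i) ∧ ∀ᵐ ω ∂μ, |X ω| ≤ ∑ i, l i * |Y i ω|

/-- Dilatation monotonicity of `ρ` on `𝓧`. -/
def DilMono (μ : Measure Ω) (𝓧 : Set (Ω → ℝ)) (ρ : (Ω → ℝ) → EReal) : Prop :=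
  ∀ X ∈ 𝓧, ∀ π : FinPartition μ, ρ (pCondExp μ π X) ≤ ρ X

/-- The Fatou property of `ρ` on `𝓧`. -/
def FatouProp (μ : Measure Ω) (𝓧 : Set (Ω → ℝ)) (ρ : (Ω → ℝ) → EReal) : Prop :=
  ∀ (Xn : ℕ → Ω → ℝ) (X : Ω → ℝ), (∀ n, Xn n ∈ 𝓧) → X ∈ 𝓧 →
    (∀ᵐ ω ∂μ, Tendsto (fun n => Xn n ω) atTop (nhds (X ω))) →
    (∃ Y, MemIdeal μ 𝓧 Y ∧ ∀ᵐ ω ∂μ, ∀ n, |Xn n ω| ≤ Y ω) →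
    ρ X ≤ liminf (fun n => ρ (Xn n)) atTop

/-- Convergence of a net in the `σ(L¹, 𝓛)` topology. -/
def TendstoWeakSimple (μ : Measure Ω) {ι : Type*} (l : Filter ι)
    (Xn : ι → Ω → ℝ) (X : Ω → ℝ) : Prop :=
  ∀ Z : Ω → ℝ, IsSimpleRV Z →
    Tendsto (fun i => ∫ ω, Xn i ω * Z ω ∂μ) l (nhds (∫ ω, X ω * Z ω ∂μ))

/-- The extension `ρ̄(X) = sup_{π ∈ Π} ρ(E[X|π])`. -/
noncomputable def rhoBar (μ : Measure Ω) (ρ : (Ω → ℝ) → EReal) (X : Ω → ℝ) : EReal :=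
  ⨆ π : FinPartition μ, ρ (pCondExp μ π X)

/-- The conjugate `ρ^#(Y) = sup_{X ∈ 𝓛} { E[XY] - ρ(X) }`. -/
noncomputable def sharp (μ : Measure Ω) (ρ : (Ω → ℝ) → EReal) (Y : Ω → ℝ) : EReal :=
  ⨆ X : {X : Ω → ℝ // IsSimpleRV X}, (((∫ ω, X.1 ω * Y ω ∂μ : ℝ) : EReal) - ρ X.1)

variable {μ : Measure Ω}

lemma exists_part_mem (π : FinPartition μ) (ω : Ω) : ∃ A ∈ π.parts, ω ∈ A := by
  have : ω ∈ ⋃ A ∈ π.parts, A := π.cover ▸ Set.mem_univ ω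
  simpa using this

lemma pCondExp_apply (π : FinPartition μ) (X : Ω → ℝ) {A : Set Ω} (hA : A ∈ π.parts)
    {ω : Ω} (hω : ω ∈ A) :
    pCondExp μ π X ω = (∫ x in A, X x ∂μ) / (μ A).toReal := by
  unfold pCondExp
  rw [Finset.sum_eq_single_of_mem A hA]
  · simp [Set.indicator_of_mem hω]
  · intro B hB hBA
    refine Set.indicator_of_notMem (fun hωB => ?_) _
    exact Set.disjoint_left.mp (π.pairwiseDisj B hB A hA hBA) hωB hω

lemma isSimpleRV_pCondExp (π : FinPartition μ) (X : Ω → ℝ) : IsSimpleRV (pCondExp μ π X) := by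
  constructor
  · exact Finset.measurable_sum _ fun A hA => (measurable_const.indicator (π.measSet A hA))
  · apply Set.Finite.subset
      (Set.Finite.insert 0 ((π.parts.finite_toSet.image
        (fun A => (∫ x in A, X x ∂μ) / (μ A).toReal))))
    rintro y ⟨ω, rfl⟩
    obtain ⟨A, hA, hω⟩ := exists_part_mem π ω
    rw [pCondExp_apply π X hA hω]
    exact Set.mem_insert_of_mem _ ⟨A, hA, rfl⟩

lemma pCondExp_congr_ae (π : FinPartition μ) {X X' : Ω → ℝ} (h : X =ᵐ[μ] X') :
    pCondExp μ π X = pCondExp μ π X' := by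
  funext ω
  unfold pCondExp
  refine Finset.sum_congr rfl fun A hA => ?_
  have : (∫ x in A, X x ∂μ) = ∫ x in A, X' x ∂μ :=
    integral_congr_ae (ae_restrict_of_ae h)
  rw [this]

lemma pCondExp_idem [IsFiniteMeasure μ] (π : FinPartition μ) (X : Ω → ℝ) :
    pCondExp μ π (pCondExp μ π X) = pCondExp μ π X := by
  funext ω
  obtain ⟨A, hA, hω⟩ := exists_part_mem π ω
  rw [pCondExp_apply π _ hA hω, pCondExp_apply π X hA hω]
  have h1 : ∫ x in A, pCondExp μ π X x ∂μ
      = ∫ x in A, ((∫ y in A, X y ∂μ) / (μ A).toReal) ∂μ := by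
    refine setIntegral_congr_fun (π.measSet A hA) fun x hx => ?_
    exact pCondExp_apply π X hA hx
  have hμA : (μ A).toReal ≠ 0 :=
    ENNReal.toReal_ne_zero.mpr ⟨(π.pos A hA).ne', (measure_lt_top μ A).ne⟩
  rw [h1, setIntegral_const, smul_eq_mul]
  field_simp
  rw [measureReal_def]; ring

lemma avg_bounds [IsFiniteMeasure μ] {A : Set Ω} (hA : MeasurableSet A) (h0 : 0 < μ A)
    {X : Ω → ℝ} (hX : Integrable X μ) {lo hi : ℝ} (h : ∀ ω ∈ A, X ω ∈ Set.Icc lo hi) :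
    (∫ x in A, X x ∂μ) / (μ A).toReal ∈ Set.Icc lo hi := by
  have hμA : 0 < (μ A).toReal :=
    ENNReal.toReal_pos h0.ne' (measure_lt_top μ A).ne
  have hlo : lo * (μ A).toReal ≤ ∫ x in A, X x ∂μ := by
    have := setIntegral_mono_on (integrableOn_const (measure_lt_top μ A).ne)
      hX.integrableOn hA (fun x hx => (h x hx).1)
    simpa [setIntegral_const, smul_eq_mul, mul_comm, measureReal_def] using this
  have hhi : (∫ x in A, X x ∂μ) ≤ hi * (μ A).toReal := by
    have := setIntegral_mono_on hX.integrableOn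
      (integrableOn_const (measure_lt_top μ A).ne) hA (fun x hx => (h x hx).2)
    simpa [setIntegral_const, smul_eq_mul, mul_comm, measureReal_def] using this
  constructor
  · rw [le_div_iff₀ hμA]; exact hlo
  · rw [div_le_iff₀ hμA]; exact hhi


lemma tail_integral_tendsto {X : Ω → ℝ} (hXm : Measurable X) (hXi : Integrable X μ) :
    Tendsto (fun j : ℕ => ∫ ω in {ω | (j:ℝ) ≤ |X ω|}, |X ω| ∂μ) atTop (𝓝 0) := by
  have hmeas : ∀ j : ℕ, MeasurableSet {ω | (j:ℝ) ≤ |X ω|} := fun j =>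
    measurableSet_le measurable_const hXm.abs
  have h0 : (0:ℝ) = ∫ ω, (0:ℝ) ∂μ := by simp
  rw [h0]
  have : ∀ j : ℕ, ∫ ω in {ω | (j:ℝ) ≤ |X ω|}, |X ω| ∂μ
      = ∫ ω, Set.indicator {ω | (j:ℝ) ≤ |X ω|} (fun ω => |X ω|) ω ∂μ := fun j =>
    (integral_indicator (hmeas j)).symm
  simp_rw [this]
  refine tendsto_integral_of_dominated_convergence (fun ω => |X ω|) ?_ hXi.abs ?_ ?_
  · intro j
    exact (hXm.abs.indicator (hmeas j)).aestronglyMeasurable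
  · intro j
    refine Eventually.of_forall fun ω => ?_
    by_cases h : ω ∈ {ω | (j:ℝ) ≤ |X ω|}
    · rw [Set.indicator_of_mem h]; simp
    · rw [Set.indicator_of_notMem h]; simp
  · refine Eventually.of_forall fun ω => ?_
    obtain ⟨j₀, hj₀⟩ := exists_nat_gt (|X ω|)
    refine tendsto_const_nhds.congr' ?_
    filter_upwards [eventually_ge_atTop j₀] with j hj
    rw [Set.indicator_of_notMem]
    simp only [Set.mem_setOf_eq, not_le]
    exact lt_of_lt_of_le hj₀ (by exact_mod_cast hj)


set_option maxHeartbeats 2000000 in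
lemma exists_good_partition [IsProbabilityMeasure μ] {X : Ω → ℝ} (hXm : Measurable X)
    (hXi : Integrable X μ) {M : ℝ} (hM0 : 0 ≤ M) (hM : 0 < μ {ω | |X ω| ≤ M}) (n : ℕ) :
    ∃ (π : FinPartition μ) (N : Set Ω), μ N = 0 ∧
      (∀ ω, |pCondExp μ π X ω| ≤ |X ω| + (M + 5)) ∧
      (∀ ω ∉ N, |X ω| < n → |pCondExp μ π X ω - X ω| ≤ (M + 5) * ((2:ℝ)^n)⁻¹) := by
  classical
  set w : ℝ := ((2:ℝ)^n)⁻¹ with hw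
  have hwpos : 0 < w := by positivity
  have hwle : w ≤ 1 := by
    rw [hw]
    rw [inv_le_one_iff₀]
    right; exact one_le_pow₀ (by norm_num)
  set A : ℤ → Set Ω := fun k => X ⁻¹' (Set.Ico ((k:ℝ) * w) (((k:ℝ) + 1) * w)) with hA
  have hAmeas : ∀ k, MeasurableSet (A k) := fun k => hXm measurableSet_Ico
  have hmemA : ∀ (ω : Ω) (k : ℤ), ω ∈ A k ↔ (k:ℝ) * w ≤ X ω ∧ X ω < ((k:ℝ)+1) * w := by
    intro ω k
    simp [hA, Set.mem_Ico]
  have hidx : ∀ (ω : Ω) (k : ℤ), ω ∈ A k → k = ⌊X ω / w⌋ := by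
    intro ω k hk
    rw [hmemA] at hk
    symm
    rw [Int.floor_eq_iff]
    constructor
    · exact (le_div_iff₀ hwpos).mpr hk.1
    · rw [div_lt_iff₀ hwpos]; push_cast; exact hk.2
  have hmemfloor : ∀ ω : Ω, ω ∈ A ⌊X ω / w⌋ := by
    intro ω
    rw [hmemA]
    constructor
    · exact (le_div_iff₀ hwpos).mp (Int.floor_le _)
    · rw [← div_lt_iff₀ hwpos]
      have := Int.lt_floor_add_one (X ω / w)
      push_cast
      linarith
  have hdisjA : ∀ k l : ℤ, k ≠ l → Disjoint (A k) (A l) := by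
    intro k l hkl
    rw [Set.disjoint_left]
    intro ω h1 h2
    exact hkl ((hidx ω k h1).trans (hidx ω l h2).symm)
  -- choice of k₀
  set c : ℤ := (⌈M / w⌉₊ : ℤ) with hc
  have hcover : {ω | |X ω| ≤ M} ⊆ ⋃ k ∈ Finset.Icc (-c) c, A k := by
    intro ω hω
    simp only [Set.mem_setOf_eq] at hω
    have habs : |X ω / w| ≤ (c:ℝ) := by
      rw [abs_div, abs_of_pos hwpos, div_le_iff₀ hwpos]
      calc |X ω| ≤ M := hω
        _ ≤ (⌈M / w⌉₊ : ℝ) * w := by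
            rw [← div_le_iff₀ hwpos]; exact Nat.le_ceil _
        _ = (c:ℝ) * w := by push_cast [hc]; ring
    rw [abs_le] at habs
    refine Set.mem_biUnion (s := (Finset.Icc (-c) c : Finset ℤ)) ?_ (hmemfloor ω)
    simp only [Finset.mem_coe, Finset.mem_Icc]
    constructor
    · exact Int.le_floor.mpr (by exact_mod_cast habs.1)
    · have h2 : ⌊X ω / w⌋ < c + 1 := Int.floor_lt.mpr (by push_cast; linarith [habs.2])
      omega
  obtain ⟨k₀, hk₀mem, hk₀pos⟩ : ∃ k₀ ∈ Finset.Icc (-c) c, 0 < μ (A k₀) := by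
    by_contra h
    push_neg at h
    have hnull : μ (⋃ k ∈ Finset.Icc (-c) c, A k) = 0 := by
      refine measure_biUnion_null_iff (Finset.countable_toSet _) |>.mpr fun k hk => ?_
      exact le_antisymm (h k (by simpa using hk)) zero_le
    exact absurd (measure_mono_null hcover hnull) hM.ne'
  -- bound on the companion cell
  set B : ℝ := M + 2 with hB
  have hk₀bound : ∀ ω ∈ A k₀, |X ω| ≤ B := by
    intro ω hω
    rw [hmemA] at hω
    simp only [Finset.mem_Icc] at hk₀mem
    have hcw : (c:ℝ) * w ≤ M + 1 := by
      have : (c:ℝ) ≤ M / w + 1 := by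
        rw [hc]; push_cast
        exact le_of_lt (Nat.ceil_lt_add_one (by positivity))
      calc (c:ℝ) * w ≤ (M / w + 1) * w := by nlinarith
        _ = M + w := by field_simp
        _ ≤ M + 1 := by linarith
    have h1 : (-(c:ℝ)) * w ≤ (k₀:ℝ) * w := by
      have : ((-c : ℤ):ℝ) ≤ (k₀:ℝ) := by exact_mod_cast hk₀mem.1
      push_cast at this ⊢
      nlinarith
    have h2 : ((k₀:ℝ)+1) * w ≤ ((c:ℝ)+1) * w := by
      have : (k₀:ℝ) ≤ (c:ℝ) := by exact_mod_cast hk₀mem.2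
      nlinarith
    rw [abs_le]
    constructor
    · calc -B ≤ -(M+1) := by rw [hB]; linarith
        _ ≤ (-(c:ℝ)) * w := by nlinarith
        _ ≤ X ω := le_trans h1 hω.1
    · calc X ω ≤ ((c:ℝ)+1)*w := le_of_lt (lt_of_lt_of_le hω.2 h2)
        _ ≤ M + 1 + w := by nlinarith
        _ ≤ B := by rw [hB]; linarith
  -- tail threshold
  set δ : ℝ := (μ (A k₀)).toReal with hδdef
  have hδpos : 0 < δ := ENNReal.toReal_pos hk₀pos.ne' (measure_lt_top μ _).ne
  obtain ⟨j, hj1, hjtail⟩ : ∃ j : ℕ, 1 ≤ j ∧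
      ∫ ω in {ω | (j:ℝ) ≤ |X ω|}, |X ω| ∂μ ≤ w * δ := by
    have htend := tail_integral_tendsto hXm hXi (μ := μ)
    have hev := htend.eventually_le_const (show (0:ℝ) < w * δ by positivity)
    obtain ⟨j, hj⟩ := ((eventually_ge_atTop 1).and hev).exists
    exact ⟨j, hj.1, hj.2⟩
  set K : ℤ := 2^n * (max n j : ℕ) + c + 1 with hK
  set T : ℝ := (K:ℝ) * w with hT
  have hTval : T = (max n j : ℕ) + ((c:ℝ) + 1) * w := by
    rw [hT, hK, hw]
    push_cast
    field_simp
    ring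
  have hcnn : (0:ℝ) ≤ (c:ℝ) := by rw [hc]; positivity
  have hTn : (n:ℝ) ≤ T := by
    rw [hTval]
    have : (n:ℝ) ≤ ((max n j : ℕ):ℝ) := by exact_mod_cast Nat.le_max_left n j
    nlinarith
  have hTj : (j:ℝ) ≤ T := by
    rw [hTval]
    have : (j:ℝ) ≤ ((max n j : ℕ):ℝ) := by exact_mod_cast Nat.le_max_right n j
    nlinarith
  have hcK : c < K := by
    rw [hK]
    have : (0:ℤ) ≤ 2^n * (max n j : ℕ) := by positivity
    omega
  -- the partition
  set sIdx : Finset ℤ := (Finset.Icc (-K) (K-1)).erase k₀ with hsIdx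
  set good : Finset ℤ := sIdx.filter (fun k => 0 < μ (A k)) with hgood
  set U : Set Ω := ⋃ k ∈ good, A k with hU
  have hUmeas : MeasurableSet U :=
    MeasurableSet.biUnion (Finset.countable_toSet _) (fun k _ => hAmeas k)
  set R : Set Ω := Set.univ \ U with hR
  have hRmeas : MeasurableSet R := MeasurableSet.univ.diff hUmeas
  have hk₀notgood : k₀ ∉ good := by
    rw [hgood, hsIdx]
    simp [Finset.mem_erase]
  have hAk₀R : A k₀ ⊆ R := by
    intro ω hω
    refine ⟨Set.mem_univ ω, ?_⟩
    rw [hU]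
    simp only [Set.mem_iUnion, not_exists]
    intro k hk
    intro hωk
    exact hk₀notgood (by rwa [(hidx ω k hωk).trans (hidx ω k₀ hω).symm] at hk)
  have hRpos : 0 < μ R := lt_of_lt_of_le hk₀pos (measure_mono hAk₀R)
  set π : FinPartition μ := {
    parts := insert R (good.image A)
    measSet := by
      intro S hS
      rcases Finset.mem_insert.mp hS with h | h
      · exact h ▸ hRmeas
      · obtain ⟨k, _, rfl⟩ := Finset.mem_image.mp h
        exact hAmeas k
    pairwiseDisj := by
      intro S hS S' hS' hne
      rcases Finset.mem_insert.mp hS with h | h <;>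
        rcases Finset.mem_insert.mp hS' with h' | h'
      · exact absurd (h.trans h'.symm) hne
      · obtain ⟨k, hk, rfl⟩ := Finset.mem_image.mp h'
        subst h
        rw [Set.disjoint_left]
        intro ω hω hω'
        exact hω.2 (Set.mem_biUnion (by exact_mod_cast hk) hω')
      · obtain ⟨k, hk, rfl⟩ := Finset.mem_image.mp h
        subst h'
        rw [Set.disjoint_right]
        intro ω hω hω'
        exact hω.2 (Set.mem_biUnion (by exact_mod_cast hk) hω')
      · obtain ⟨k, hk, rfl⟩ := Finset.mem_image.mp h
        obtain ⟨l, hl, rfl⟩ := Finset.mem_image.mp h'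
        exact hdisjA k l (fun hkl => hne (by rw [hkl]))
    cover := by
      apply Set.eq_univ_of_forall
      intro ω
      by_cases hωU : ω ∈ U
      · rw [hU] at hωU
        simp only [Set.mem_iUnion] at hωU
        obtain ⟨k, hk, hωk⟩ := hωU
        exact Set.mem_biUnion (Finset.mem_insert_of_mem (Finset.mem_image_of_mem A hk)) hωk
      · exact Set.mem_biUnion (Finset.mem_insert_self _ _) ⟨Set.mem_univ ω, hωU⟩
    pos := by
      intro S hS
      rcases Finset.mem_insert.mp hS with h | h
      · exact h ▸ hRpos
      · obtain ⟨k, hk, rfl⟩ := Finset.mem_image.mp h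
        exact (Finset.mem_filter.mp hk).2
  } with hπ
  have hπparts : π.parts = insert R (good.image A) := rfl
  -- value function
  set v : Set Ω → ℝ := fun S => (∫ x in S, X x ∂μ) / (μ S).toReal with hv
  have hvapply : ∀ {S : Set Ω}, S ∈ π.parts → ∀ {ω}, ω ∈ S → pCondExp μ π X ω = v S := by
    intro S hS ω hω
    exact pCondExp_apply π X hS hω
  -- good cell estimate
  have hgoodest : ∀ k : ℤ, 0 < μ (A k) → ∀ ω ∈ A k, |v (A k) - X ω| ≤ w := by
    intro k hk ω hω
    have hmem : ∀ x ∈ A k, X x ∈ Set.Icc ((k:ℝ)*w) (((k:ℝ)+1)*w) := by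
      intro x hx
      rw [hmemA] at hx
      exact ⟨hx.1, le_of_lt hx.2⟩
    have hvmem := avg_bounds (hAmeas k) hk hXi hmem
    rw [hmemA] at hω
    rw [abs_le]
    constructor
    · nlinarith [hvmem.1, hvmem.2, hω.1, hω.2]
    · nlinarith [hvmem.1, hvmem.2, hω.1, hω.2]
  -- tail and null sets
  set Tail : Set Ω := {ω | T ≤ |X ω|} with hTail
  have hTailmeas : MeasurableSet Tail := measurableSet_le measurable_const hXm.abs
  set Nul : Set Ω := ⋃ k ∈ sIdx.filter (fun k => μ (A k) = 0), A k with hNul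
  have hNulmeas : MeasurableSet Nul :=
    MeasurableSet.biUnion (Finset.countable_toSet _) (fun k _ => hAmeas k)
  have hNulnull : μ Nul = 0 := by
    refine measure_biUnion_null_iff (Finset.countable_toSet _) |>.mpr fun k hk => ?_
    exact (Finset.mem_filter.mp hk).2
  have hRsub : R \ A k₀ ⊆ Tail ∪ Nul := by
    intro ω hω
    by_cases hT : T ≤ |X ω|
    · exact Or.inl hT
    push_neg at hT
    right
    set k : ℤ := ⌊X ω / w⌋ with hk
    have hωk : ω ∈ A k := hmemfloor ω
    have habs : |X ω / w| < (K:ℝ) := by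
      rw [abs_div, abs_of_pos hwpos, div_lt_iff₀ hwpos]
      exact hT
    rw [abs_lt] at habs
    have hkmem : k ∈ sIdx := by
      rw [hsIdx, Finset.mem_erase]
      constructor
      · intro hkk₀
        exact hω.2 (hkk₀ ▸ hωk)
      · rw [Finset.mem_Icc]
        constructor
        · exact Int.le_floor.mpr (by push_cast; linarith [habs.1])
        · have : k < K := Int.floor_lt.mpr (by exact_mod_cast habs.2)
          omega
    have hknull : μ (A k) = 0 := by
      by_contra hpos
      have hkg : k ∈ good := by
        rw [hgood, Finset.mem_filter]
        exact ⟨hkmem, pos_iff_ne_zero.mpr hpos⟩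
      exact hω.1.2 (Set.mem_biUnion hkg hωk)
    exact Set.mem_biUnion (Finset.mem_filter.mpr ⟨hkmem, hknull⟩) hωk
  -- tail estimates
  have hTailsub : Tail ⊆ {ω | (j:ℝ) ≤ |X ω|} := fun ω hω => le_trans hTj hω
  have hTailint : ∫ x in Tail, |X x| ∂μ ≤ w * δ := by
    refine le_trans (setIntegral_mono_set hXi.abs.integrableOn ?_ (HasSubset.Subset.eventuallyLE hTailsub)) hjtail
    exact Eventually.of_forall fun x => abs_nonneg _
  have hTailmeasure : (μ Tail).toReal ≤ w * δ := by
    have h1 : (μ Tail).toReal = ∫ x in Tail, (1:ℝ) ∂μ := by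
      rw [setIntegral_const, smul_eq_mul, mul_one, measureReal_def]
    have h2 : ∫ x in Tail, (1:ℝ) ∂μ ≤ ∫ x in Tail, |X x| ∂μ := by
      refine setIntegral_mono_on (integrableOn_const (measure_lt_top μ _).ne)
        hXi.abs.integrableOn hTailmeas fun x hx => ?_
      have : (1:ℝ) ≤ T := le_trans (by exact_mod_cast hj1) hTj
      exact le_trans this hx
    linarith
  have hTailNulint : ∫ x in Tail ∪ Nul, |X x| ∂μ ≤ w * δ := by
    have heq : (Tail ∪ Nul : Set Ω) =ᵐ[μ] Tail := by
      rw [MeasureTheory.ae_eq_set]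
      constructor
      · refine measure_mono_null ?_ hNulnull
        intro x hx
        exact hx.1.resolve_left (fun h => hx.2 h)
      · simp [Set.diff_eq_empty.mpr Set.subset_union_left]
    rw [setIntegral_congr_set heq]
    exact hTailint
  have hrint : |∫ x in R \ A k₀, X x ∂μ| ≤ w * δ := by
    have h0 : |∫ x in R \ A k₀, X x ∂μ| ≤ ∫ x in R \ A k₀, |X x| ∂μ := by
      simpa [Real.norm_eq_abs] using norm_integral_le_integral_norm (μ := μ.restrict (R \ A k₀)) X
    refine le_trans h0 (le_trans (setIntegral_mono_set hXi.abs.integrableOn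
      (Eventually.of_forall fun x => abs_nonneg _)
      (HasSubset.Subset.eventuallyLE hRsub)) hTailNulint)
  have hsmeasure : (μ (R \ A k₀)).toReal ≤ w * δ := by
    have h1 : μ (R \ A k₀) ≤ μ Tail + μ Nul := le_trans (measure_mono hRsub) (measure_union_le _ _)
    have h2 : μ (R \ A k₀) ≤ μ Tail := by rwa [hNulnull, add_zero] at h1
    exact le_trans (ENNReal.toReal_mono (measure_lt_top μ _).ne h2) hTailmeasure
  -- splitting R
  have hRunion : R = A k₀ ∪ (R \ A k₀) := (Set.union_diff_cancel hAk₀R).symm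
  have hdisjR : Disjoint (A k₀) (R \ A k₀) := Set.disjoint_sdiff_right
  have hRsplit : ∫ x in R, X x ∂μ = (∫ x in A k₀, X x ∂μ) + ∫ x in R \ A k₀, X x ∂μ := by
    have h0 := setIntegral_union hdisjR (hRmeas.diff (hAmeas k₀))
      (hXi.integrableOn (s := A k₀)) (hXi.integrableOn (s := R \ A k₀))
    rw [← hRunion] at h0
    exact h0
  have hμRsplit : (μ R).toReal = δ + (μ (R \ A k₀)).toReal := by
    have h0 : μ R = μ (A k₀) + μ (R \ A k₀) := by
      conv_lhs => rw [hRunion]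
      exact measure_union hdisjR (hRmeas.diff (hAmeas k₀))
    rw [h0, ENNReal.toReal_add (measure_lt_top μ _).ne (measure_lt_top μ _).ne]
  have hI₀bound : |∫ x in A k₀, X x ∂μ| ≤ B * δ := by
    have h0 : |∫ x in A k₀, X x ∂μ| ≤ ∫ x in A k₀, |X x| ∂μ := by
      simpa [Real.norm_eq_abs] using norm_integral_le_integral_norm (μ := μ.restrict (A k₀)) X
    refine le_trans h0 ?_
    have := setIntegral_mono_on hXi.abs.integrableOn
      (integrableOn_const (measure_lt_top μ _).ne) (hAmeas k₀) hk₀bound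
    simpa [setIntegral_const, smul_eq_mul, mul_comm, measureReal_def, ← hδdef] using this
  have hI₀close : ∀ ω ∈ A k₀, |(∫ x in A k₀, X x ∂μ) - X ω * δ| ≤ w * δ := by
    intro ω hω
    have h1 := hgoodest k₀ hk₀pos ω hω
    have h2 : v (A k₀) = (∫ x in A k₀, X x ∂μ) / δ := rfl
    have h3 : (∫ x in A k₀, X x ∂μ) - X ω * δ = (v (A k₀) - X ω) * δ := by
      rw [h2]; field_simp
    rw [h3, abs_mul, abs_of_pos hδpos]
    exact mul_le_mul_of_nonneg_right h1 (le_of_lt hδpos) |>.trans (le_refl _)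
  -- more positivity facts
  have hmRpos : 0 < (μ R).toReal := ENNReal.toReal_pos hRpos.ne' (measure_lt_top μ _).ne
  have hs'0 : 0 ≤ (μ (R \ A k₀)).toReal := ENNReal.toReal_nonneg
  have hδleR : δ ≤ (μ R).toReal := by rw [hμRsplit]; linarith
  have hB0 : 0 ≤ B := by rw [hB]; linarith
  -- conclusion
  refine ⟨π, Nul, hNulnull, ?_, ?_⟩
  · intro ω
    by_cases hωU : ω ∈ U
    · rw [hU] at hωU
      simp only [Set.mem_iUnion] at hωU
      obtain ⟨k, hk, hωk⟩ := hωU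
      have hmem : A k ∈ π.parts := Finset.mem_insert_of_mem (Finset.mem_image_of_mem A hk)
      rw [hvapply hmem hωk]
      have hkpos : 0 < μ (A k) := by
        have hk' : k ∈ good := by exact_mod_cast hk
        rw [hgood, Finset.mem_filter] at hk'
        exact hk'.2
      have h1 := hgoodest k hkpos ω hωk
      have h2 : |v (A k)| ≤ |X ω| + w := by
        have : v (A k) = X ω + (v (A k) - X ω) := by ring
        rw [this]
        exact le_trans (abs_add_le _ _) (by linarith)
      linarith [abs_nonneg (X ω)]
    · have hωR : ω ∈ R := ⟨Set.mem_univ ω, hωU⟩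
      rw [hvapply (Finset.mem_insert_self _ _) hωR]
      have hnum : |∫ x in R, X x ∂μ| ≤ (B + 1) * (μ R).toReal := by
        rw [hRsplit]
        calc |(∫ x in A k₀, X x ∂μ) + ∫ x in R \ A k₀, X x ∂μ|
            ≤ |∫ x in A k₀, X x ∂μ| + |∫ x in R \ A k₀, X x ∂μ| := abs_add_le _ _
          _ ≤ B * δ + w * δ := add_le_add hI₀bound hrint
          _ ≤ (B + 1) * δ := by nlinarith
          _ ≤ (B + 1) * (μ R).toReal := by nlinarith
      have h3 : |v R| ≤ B + 1 := by
        rw [hv]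
        simp only
        rw [abs_div, abs_of_pos hmRpos, div_le_iff₀ hmRpos]
        exact hnum
      rw [hB] at h3
      linarith [abs_nonneg (X ω)]
  · intro ω hωNul hωn
    by_cases hωU : ω ∈ U
    · rw [hU] at hωU
      simp only [Set.mem_iUnion] at hωU
      obtain ⟨k, hk, hωk⟩ := hωU
      have hmem : A k ∈ π.parts := Finset.mem_insert_of_mem (Finset.mem_image_of_mem A hk)
      rw [hvapply hmem hωk]
      have hkpos : 0 < μ (A k) := by
        have hk' : k ∈ good := by exact_mod_cast hk
        rw [hgood, Finset.mem_filter] at hk'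
        exact hk'.2
      have h1 := hgoodest k hkpos ω hωk
      have hM5 : (1:ℝ) ≤ M + 5 := by linarith
      calc |v (A k) - X ω| ≤ w := h1
        _ = 1 * w := (one_mul w).symm
        _ ≤ (M + 5) * w := by nlinarith
    · have hωR : ω ∈ R := ⟨Set.mem_univ ω, hωU⟩
      have hωAk₀ : ω ∈ A k₀ := by
        by_contra hno
        rcases hRsub ⟨hωR, hno⟩ with hT | hN
        · rw [hTail] at hT
          simp only [Set.mem_setOf_eq] at hT
          linarith [lt_of_lt_of_le hωn hTn]
        · exact hωNul hN
      rw [hvapply (Finset.mem_insert_self _ _) hωR]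
      have h2 : |X ω| ≤ B := hk₀bound ω hωAk₀
      have h1 := hI₀close ω hωAk₀
      have hnum : |(∫ x in R, X x ∂μ) - X ω * (μ R).toReal| ≤ (B + 2) * w * δ := by
        rw [hRsplit, hμRsplit]
        have e1 : (∫ x in A k₀, X x ∂μ) + (∫ x in R \ A k₀, X x ∂μ)
            - X ω * (δ + (μ (R \ A k₀)).toReal)
            = ((∫ x in A k₀, X x ∂μ) - X ω * δ)
              + ((∫ x in R \ A k₀, X x ∂μ) - X ω * (μ (R \ A k₀)).toReal) := by ring
        rw [e1]
        have e2 : |(∫ x in R \ A k₀, X x ∂μ) - X ω * (μ (R \ A k₀)).toReal|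
            ≤ w * δ + B * (w * δ) := by
          refine le_trans (abs_sub _ _) ?_
          have : |X ω * (μ (R \ A k₀)).toReal| ≤ B * (w * δ) := by
            rw [abs_mul, abs_of_nonneg hs'0]
            exact mul_le_mul h2 hsmeasure hs'0 hB0
          linarith [hrint]
        refine le_trans (abs_add_le _ _) ?_
        have := abs_nonneg (X ω)
        nlinarith
      have heq : v R - X ω = ((∫ x in R, X x ∂μ) - X ω * (μ R).toReal) / (μ R).toReal := by
        rw [hv]
        field_simp
      rw [heq, abs_div, abs_of_pos hmRpos, div_le_iff₀ hmRpos]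
      have hB2 : B + 2 ≤ M + 5 := by rw [hB]; linarith
      calc |(∫ x in R, X x ∂μ) - X ω * (μ R).toReal| ≤ (B + 2) * w * δ := hnum
        _ ≤ (M + 5) * w * (μ R).toReal := by
            have hp : (B + 2) * δ ≤ (M + 5) * (μ R).toReal :=
              mul_le_mul hB2 hδleR (le_of_lt hδpos) (by linarith)
            nlinarith [hwpos.le, hp]

lemma exists_approx [IsProbabilityMeasure μ] (X : Ω → ℝ) (hX : Integrable X μ) :
    ∃ (b : ℝ) (πs : ℕ → FinPartition μ), 0 ≤ b ∧
      (∀ᵐ ω ∂μ, ∀ n, |pCondExp μ (πs n) X ω| ≤ |X ω| + b) ∧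
      (∀ᵐ ω ∂μ, Tendsto (fun n => pCondExp μ (πs n) X ω) atTop (𝓝 (X ω))) := by
  classical
  set X' : Ω → ℝ := hX.1.mk X with hX'
  have hXX' : X =ᵐ[μ] X' := hX.1.ae_eq_mk
  have hX'm : Measurable X' := hX.1.measurable_mk
  have hX'i : Integrable X' μ := hX.congr hXX'
  -- choose M
  obtain ⟨M, hM0, hM⟩ : ∃ M : ℝ, 0 ≤ M ∧ 0 < μ {ω | |X' ω| ≤ M} := by
    by_contra h
    push_neg at h
    have hz : ∀ m : ℕ, μ {ω | |X' ω| ≤ (m:ℝ)} = 0 := by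
      intro m
      have := h (m:ℝ) (by positivity)
      exact le_antisymm this zero_le
    have hcov : Set.univ ⊆ ⋃ m : ℕ, {ω | |X' ω| ≤ (m:ℝ)} := by
      intro ω _
      obtain ⟨m, hm⟩ := exists_nat_ge (|X' ω|)
      exact Set.mem_iUnion.mpr ⟨m, hm⟩
    have h1 : μ Set.univ = 0 :=
      measure_mono_null hcov (measure_iUnion_null hz)
    rw [measure_univ] at h1
    exact one_ne_zero h1
  have hex := fun n => exists_good_partition hX'm hX'i hM0 hM n
  choose πs N hNnull hbound hclose using hex
  have hcongr : ∀ n, pCondExp μ (πs n) X = pCondExp μ (πs n) X' :=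
    fun n => pCondExp_congr_ae (πs n) hXX'
  refine ⟨M + 5, πs, by linarith, ?_, ?_⟩
  · filter_upwards [hXX'] with ω hω
    intro n
    rw [hcongr n, hω]
    exact hbound n ω
  · have hNall : μ (⋃ n, N n) = 0 := measure_iUnion_null hNnull
    filter_upwards [hXX', measure_eq_zero_iff_ae_notMem.mp hNall] with ω hω hωN
    simp only [Set.mem_iUnion, not_exists] at hωN
    rw [hω]
    have hconv : Tendsto (fun n => pCondExp μ (πs n) X' ω) atTop (𝓝 (X' ω)) := by
      have hsq : Tendsto (fun n : ℕ => (M + 5) * ((2:ℝ)^n)⁻¹) atTop (𝓝 0) := by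
        have h2 : Tendsto (fun n : ℕ => ((2:ℝ)^n)⁻¹) atTop (𝓝 0) := by
          simp_rw [← inv_pow]
          exact tendsto_pow_atTop_nhds_zero_of_lt_one (by norm_num) (by norm_num)
        simpa using h2.const_mul (M + 5)
      have hdiff : Tendsto (fun n => pCondExp μ (πs n) X' ω - X' ω) atTop (𝓝 0) := by
        apply squeeze_zero_norm' _ hsq
        obtain ⟨n₀, hn₀⟩ := exists_nat_gt (|X' ω|)
        filter_upwards [eventually_ge_atTop n₀] with n hn
        have : |X' ω| < (n:ℝ) := lt_of_lt_of_le hn₀ (by exact_mod_cast hn)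
        simpa [Real.norm_eq_abs] using hclose n ω (hωN n) this
      have := hdiff.add_const (X' ω)
      simpa using this
    exact hconv.congr fun n => (congrFun (hcongr n) ω).symm


/-- For `ρ : 𝓧 → (-∞,∞]` dilatation monotone with the Fatou property,
`ρ̄(X) = sup_π ρ(E[X|π])` agrees with `ρ` on `𝓧`, never takes the value `-∞` on `L¹`,
is dilatation monotone on `L¹`, and is `‖·‖₁` lower semicontinuous on `L¹`. -/
theorem stmt6 (μ : Measure Ω) [IsProbabilityMeasure μ] [NullSingletonClass μ]
    (𝓧 : Set (Ω → ℝ)) (h𝓧L1 : ∀ X ∈ 𝓧, Integrable X μ)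
    (h𝓛 : ∀ Z : Ω → ℝ, IsSimpleRV Z → Z ∈ 𝓧)
    (ρ : (Ω → ℝ) → EReal) (hbot : ∀ X ∈ 𝓧, ρ X ≠ ⊥)
    (hdil : DilMono μ 𝓧 ρ) (hFatou : FatouProp μ 𝓧 ρ) :
    (∀ X ∈ 𝓧, rhoBar μ ρ X = ρ X) ∧
    (∀ X : Ω → ℝ, Integrable X μ → rhoBar μ ρ X ≠ ⊥) ∧
    (∀ X : Ω → ℝ, Integrable X μ → ∀ π : FinPartition μ,
      rhoBar μ ρ (pCondExp μ π X) ≤ rhoBar μ ρ X) ∧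
    (∀ (Xn : ℕ → Ω → ℝ) (X : Ω → ℝ), (∀ n, Integrable (Xn n) μ) → Integrable X μ →
      Tendsto (fun n => ∫ ω, |Xn n ω - X ω| ∂μ) atTop (nhds 0) →
      rhoBar μ ρ X ≤ liminf (fun n => rhoBar μ ρ (Xn n)) atTop) := by
  classical
  have hsimple_mem : ∀ (π : FinPartition μ) (X : Ω → ℝ), pCondExp μ π X ∈ 𝓧 :=
    fun π X => h𝓛 _ (isSimpleRV_pCondExp π X)
  set π0 : FinPartition μ := {
    parts := {Set.univ}
    measSet := by
      intro A hA
      rw [Finset.mem_singleton] at hA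
      exact hA ▸ MeasurableSet.univ
    pairwiseDisj := by
      intro A hA B hB hne
      rw [Finset.mem_singleton] at hA hB
      exact absurd (hA.trans hB.symm) hne
    cover := by simp
    pos := by
      intro A hA
      rw [Finset.mem_singleton] at hA
      subst hA
      rw [measure_univ]
      norm_num
  } with hπ0
  -- Part 1
  have part1 : ∀ X ∈ 𝓧, rhoBar μ ρ X = ρ X := by
    intro X hX
    refine le_antisymm (iSup_le fun π => hdil X hX π) ?_
    obtain ⟨b, πs, hb0, hdom, hconv⟩ := exists_approx X (h𝓧L1 X hX)
    have hideal : ∃ Y, MemIdeal μ 𝓧 Y ∧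
        ∀ᵐ ω ∂μ, ∀ n, |pCondExp μ (πs n) X ω| ≤ Y ω := by
      refine ⟨fun ω => |X ω| + b, ?_, hdom⟩
      refine ⟨2, ![X, fun _ => b], ![1, 1], ?_, ?_, ?_⟩
      · intro i
        fin_cases i
        · exact hX
        · exact h𝓛 _ ⟨measurable_const, Set.finite_range_const⟩
      · intro i; fin_cases i <;> norm_num
      · refine Eventually.of_forall fun ω => ?_
        simp only [Fin.sum_univ_two, Matrix.cons_val_zero, Matrix.cons_val_one, Matrix.head_cons,
          one_mul]
        exact (abs_add_le _ _).trans (by rw [abs_abs])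
    have hFat := hFatou (fun n => pCondExp μ (πs n) X) X (fun n => hsimple_mem _ _) hX hconv hideal
    refine le_trans hFat ?_
    refine Filter.liminf_le_of_frequently_le' (Frequently.of_forall fun n => ?_)
    exact le_iSup (fun π : FinPartition μ => ρ (pCondExp μ π X)) (πs n)
  -- Part 2
  have part2 : ∀ X : Ω → ℝ, Integrable X μ → rhoBar μ ρ X ≠ ⊥ := by
    intro X _ h
    have h1 : ρ (pCondExp μ π0 X) ≤ rhoBar μ ρ X :=
      le_iSup (fun π : FinPartition μ => ρ (pCondExp μ π X)) π0
    rw [h, le_bot_iff] at h1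
    exact hbot _ (hsimple_mem π0 X) h1
  -- Part 3
  have part3 : ∀ X : Ω → ℝ, Integrable X μ → ∀ π : FinPartition μ,
      rhoBar μ ρ (pCondExp μ π X) ≤ rhoBar μ ρ X := by
    intro X _ π
    refine iSup_le fun σ => ?_
    exact le_trans (hdil _ (hsimple_mem π X) σ)
      (le_iSup (fun π' : FinPartition μ => ρ (pCondExp μ π' X)) π)
  -- Part 4
  have part4 : ∀ (Xn : ℕ → Ω → ℝ) (X : Ω → ℝ), (∀ n, Integrable (Xn n) μ) → Integrable X μ →
      Tendsto (fun n => ∫ ω, |Xn n ω - X ω| ∂μ) atTop (nhds 0) →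
      rhoBar μ ρ X ≤ liminf (fun n => rhoBar μ ρ (Xn n)) atTop := by
    intro Xn X hXn hX htend
    refine iSup_le fun π => ?_
    obtain ⟨D, hD⟩ := htend.bddAbove_range
    have hDmem : ∀ i, ∫ ω, |Xn i ω - X ω| ∂μ ≤ D := fun i => hD ⟨i, rfl⟩
    have hD0 : 0 ≤ D := le_trans (integral_nonneg fun ω => abs_nonneg _) (hDmem 0)
    set C : ℝ := ∫ ω, |X ω| ∂μ + D with hC
    have hC0 : 0 ≤ C := by
      rw [hC]
      have := integral_nonneg (f := fun ω => |X ω|) (fun ω => abs_nonneg (X ω)) (μ := μ)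
      linarith
    have hCbnd : ∀ i, ∫ ω, |Xn i ω| ∂μ ≤ C := by
      intro i
      have h1 : ∫ ω, |Xn i ω| ∂μ ≤ ∫ ω, (|X ω| + |Xn i ω - X ω|) ∂μ := by
        refine integral_mono (hXn i).abs (hX.abs.add ((hXn i).sub hX).abs) fun ω => ?_
        have he : Xn i ω = X ω + (Xn i ω - X ω) := by ring
        calc |Xn i ω| = |X ω + (Xn i ω - X ω)| := by rw [← he]
          _ ≤ |X ω| + |Xn i ω - X ω| := abs_add_le _ _
      have h3 : ∫ ω, (|X ω| + |Xn i ω - X ω|) ∂μ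
          = (∫ ω, |X ω| ∂μ) + ∫ ω, |Xn i ω - X ω| ∂μ :=
        integral_add hX.abs ((hXn i).sub hX).abs
      rw [hC]
      linarith [hDmem i, h1, h3]
    have hne : π.parts.Nonempty := by
      rw [Finset.nonempty_iff_ne_empty]
      intro h
      have hcov := π.cover
      rw [h] at hcov
      simp only [Finset.notMem_empty, Set.iUnion_of_empty, Set.iUnion_empty] at hcov
      have h1 : μ (Set.univ : Set Ω) = 0 := by rw [← hcov]; exact measure_empty
      rw [measure_univ] at h1
      exact one_ne_zero h1
    set m : ℝ := π.parts.inf' hne (fun A => (μ A).toReal) with hm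
    have hmpos : 0 < m := by
      rw [hm, Finset.lt_inf'_iff]
      intro A hA
      exact ENNReal.toReal_pos (π.pos A hA).ne' (measure_lt_top μ A).ne
    have hmle : ∀ A ∈ π.parts, m ≤ (μ A).toReal := fun A hA => Finset.inf'_le _ hA
    -- uniform bound
    have hubnd : ∀ (i : ℕ) (ω : Ω), |pCondExp μ π (Xn i) ω| ≤ C / m := by
      intro i ω
      obtain ⟨A, hA, hω⟩ := exists_part_mem π ω
      rw [pCondExp_apply π (Xn i) hA hω]
      have h1 : |∫ x in A, Xn i x ∂μ| ≤ C := by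
        have h2 : |∫ x in A, Xn i x ∂μ| ≤ ∫ x in A, |Xn i x| ∂μ := by
          simpa [Real.norm_eq_abs] using
            norm_integral_le_integral_norm (μ := μ.restrict A) (Xn i)
        refine le_trans h2 (le_trans ?_ (hCbnd i))
        exact setIntegral_le_integral (hXn i).abs (Eventually.of_forall fun ω => abs_nonneg _)
      rw [abs_div, abs_of_nonneg ENNReal.toReal_nonneg]
      exact div_le_div₀ hC0 h1 hmpos (hmle A hA)
    -- pointwise convergence
    have hptconv : ∀ ω : Ω, Tendsto (fun i => pCondExp μ π (Xn i) ω) atTop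
        (𝓝 (pCondExp μ π X ω)) := by
      intro ω
      obtain ⟨A, hA, hω⟩ := exists_part_mem π ω
      have hval : Tendsto (fun i => (∫ x in A, Xn i x ∂μ) / (μ A).toReal) atTop
          (𝓝 ((∫ x in A, X x ∂μ) / (μ A).toReal)) := by
        refine Tendsto.div_const ?_ _
        have hdiff : Tendsto (fun i => (∫ x in A, Xn i x ∂μ) - ∫ x in A, X x ∂μ) atTop (𝓝 0) := by
          apply squeeze_zero_norm _ htend
          intro i
          have he : (∫ x in A, Xn i x ∂μ) - ∫ x in A, X x ∂μ = ∫ x in A, (Xn i x - X x) ∂μ :=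
            (integral_sub (hXn i).integrableOn hX.integrableOn).symm
          rw [Real.norm_eq_abs, he]
          have h2 : |∫ x in A, (Xn i x - X x) ∂μ| ≤ ∫ x in A, |Xn i x - X x| ∂μ := by
            simpa [Real.norm_eq_abs] using
              norm_integral_le_integral_norm (μ := μ.restrict A) (fun x => Xn i x - X x)
          refine le_trans h2 ?_
          exact setIntegral_le_integral ((hXn i).sub hX).abs
            (Eventually.of_forall fun ω => abs_nonneg _)
        have := hdiff.add_const (∫ x in A, X x ∂μ)
        simpa using this
      refine Tendsto.congr (fun i => (pCondExp_apply π (Xn i) hA hω).symm) ?_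
      rw [pCondExp_apply π X hA hω]
      exact hval
    have hideal : ∃ Y, MemIdeal μ 𝓧 Y ∧
        ∀ᵐ ω ∂μ, ∀ i, |pCondExp μ π (Xn i) ω| ≤ Y ω := by
      refine ⟨fun _ => C / m, ?_, Eventually.of_forall fun ω i => hubnd i ω⟩
      refine ⟨1, ![fun _ => C / m], ![1], ?_, ?_, ?_⟩
      · intro i
        fin_cases i
        exact h𝓛 _ ⟨measurable_const, Set.finite_range_const⟩
      · intro i; fin_cases i; norm_num
      · refine Eventually.of_forall fun ω => ?_
        simp [Fin.sum_univ_one]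
    have hFat := hFatou (fun i => pCondExp μ π (Xn i)) (pCondExp μ π X)
      (fun i => hsimple_mem _ _) (hsimple_mem _ _)
      (Eventually.of_forall hptconv) hideal
    refine le_trans hFat ?_
    refine Filter.liminf_le_liminf (Eventually.of_forall fun i => ?_)
    exact le_iSup (fun π' : FinPartition μ => ρ (pCondExp μ π' (Xn i))) π
  exact ⟨part1, part2, part3, part4⟩
end

section
/- Let ρ: 𝓧 → [−∞, ∞] with 𝓛 ⊆ 𝓧 ⊆ L¹ and define ρ^#(Y) = sup_{X ∈ 𝓛} { E[XY] − ρ(X) } for Y ∈ L¹. If ρ is dilatation monotone, then ρ^# is dilatation monotone on L¹, i.e. ρ^#(E[Y|π]) ≤ ρ^#(Y) for every Y ∈ L¹ and finite partition π ∈ Π. -/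
open MeasureTheory Filter Topology

variable {Ω : Type*} [MeasurableSpace Ω]

lemma IsSimpleRV.integrable {X : Ω → ℝ} (hX : IsSimpleRV X) (μ : Measure Ω)
    [IsFiniteMeasure μ] : Integrable X μ := by
  obtain ⟨C, hC⟩ := (hX.2.image (fun x => |x|)).bddAbove
  refine (integrable_const C).mono' hX.1.aestronglyMeasurable (ae_of_all _ fun ω => ?_)
  exact hC ⟨X ω, ⟨ω, rfl⟩, rfl⟩

lemma finite_range_sum {ι : Type*} (s : Finset ι) (F : ι → Ω → ℝ)
    (h : ∀ i ∈ s, (Set.range (F i)).Finite) :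
    (Set.range (fun ω => ∑ i ∈ s, F i ω)).Finite := by
  classical
  induction s using Finset.induction with
  | empty => exact (Set.finite_singleton 0).subset (by rintro _ ⟨ω, rfl⟩; simp)
  | insert _ _ hni ih =>
    rename_i a s
    simp only [Finset.sum_insert hni]
    have h1 := h a (Finset.mem_insert_self a s)
    have h2 := ih (fun i hi => h i (Finset.mem_insert_of_mem hi))
    refine (Set.Finite.image2 (· + ·) h1 h2).subset ?_
    rintro _ ⟨ω, rfl⟩
    exact Set.mem_image2_of_mem ⟨ω, rfl⟩ ⟨ω, rfl⟩

lemma pCondExp_simple (μ : Measure Ω) (π : FinPartition μ) (X : Ω → ℝ) :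
    IsSimpleRV (pCondExp μ π X) := by
  constructor
  · exact Finset.measurable_sum _ fun A hA =>
      (measurable_const.indicator (π.measSet A hA))
  · refine finite_range_sum _ _ fun A hA => ?_
    refine ((Set.finite_singleton ((∫ x in A, X x ∂μ) / (μ A).toReal)).insert 0).subset ?_
    rintro _ ⟨ω, rfl⟩
    by_cases hω : ω ∈ A
    · simp [Set.indicator_of_mem hω]
    · simp [Set.indicator_of_notMem hω]

lemma integral_mul_pCondExp (μ : Measure Ω) (π : FinPartition μ) (X Y : Ω → ℝ)
    (hX : Integrable X μ) :
    ∫ ω, X ω * pCondExp μ π Y ω ∂μ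
      = ∑ A ∈ π.parts, (∫ x in A, X x ∂μ) * (∫ x in A, Y x ∂μ) / (μ A).toReal := by
  unfold pCondExp
  have : ∀ ω, X ω * ∑ A ∈ π.parts, Set.indicator A (fun _ => (∫ x in A, Y x ∂μ) / (μ A).toReal) ω
      = ∑ A ∈ π.parts, Set.indicator A (fun ω => ((∫ x in A, Y x ∂μ) / (μ A).toReal) * X ω) ω := by
    intro ω
    rw [Finset.mul_sum]
    refine Finset.sum_congr rfl fun A hA => ?_
    by_cases hω : ω ∈ A
    · simp [Set.indicator_of_mem hω, mul_comm]
    · simp [Set.indicator_of_notMem hω]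
  simp_rw [this]
  rw [integral_finset_sum _ (fun A hA => ((hX.const_mul _).indicator (π.measSet A hA)))]
  refine Finset.sum_congr rfl fun A hA => ?_
  rw [integral_indicator (π.measSet A hA), integral_const_mul]
  ring

/-- If `ρ` on `𝓧 ⊇ 𝓛` is dilatation monotone, then the conjugate
`ρ^#(Y) = sup_{X ∈ 𝓛}{E[XY] - ρ(X)}` is dilatation monotone on `L¹`. -/
theorem stmt9 (μ : Measure Ω) [IsProbabilityMeasure μ]
    (𝓧 : Set (Ω → ℝ)) (h𝓧L1 : ∀ X ∈ 𝓧, Integrable X μ)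
    (h𝓛 : ∀ Z : Ω → ℝ, IsSimpleRV Z → Z ∈ 𝓧)
    (ρ : (Ω → ℝ) → EReal) (hdil : DilMono μ 𝓧 ρ) :
    ∀ (Y : Ω → ℝ), Integrable Y μ → ∀ π : FinPartition μ,
      sharp μ ρ (pCondExp μ π Y) ≤ sharp μ ρ Y := by
  intro Y hY π
  refine iSup_le fun X => ?_
  set X' : {X : Ω → ℝ // IsSimpleRV X} := ⟨pCondExp μ π X.1, pCondExp_simple μ π X.1⟩
  have hint : ∫ ω, X.1 ω * pCondExp μ π Y ω ∂μ = ∫ ω, X'.1 ω * Y ω ∂μ := by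
    rw [integral_mul_pCondExp μ π X.1 Y (X.2.integrable μ)]
    have h2 := integral_mul_pCondExp μ π Y X.1 hY
    have h3 : ∫ ω, X'.1 ω * Y ω ∂μ = ∫ ω, Y ω * pCondExp μ π X.1 ω ∂μ := by
      simp_rw [mul_comm]
      rfl
    rw [h3, h2]
    exact Finset.sum_congr rfl fun A hA => by ring
  have hρ : ρ X'.1 ≤ ρ X.1 := hdil X.1 (h𝓛 X.1 X.2) π
  calc ((∫ ω, X.1 ω * pCondExp μ π Y ω ∂μ : ℝ) : EReal) - ρ X.1
      ≤ ((∫ ω, X'.1 ω * Y ω ∂μ : ℝ) : EReal) - ρ X'.1 := by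
        rw [hint]; exact EReal.sub_le_sub le_rfl hρ
    _ ≤ sharp μ ρ Y := le_iSup (fun Z : {X : Ω → ℝ // IsSimpleRV X} =>
        (((∫ ω, Z.1 ω * Y ω ∂μ : ℝ) : EReal) - ρ Z.1)) X'
end

section
/- Let f: L¹ → (−∞, ∞] be dilatation monotone, ‖·‖₁ lower semicontinuous, and satisfy the coercivity condition lim_{|s|→∞} (f(s·1) + s) = ∞ where s·1 denotes constant random variables. Then for every X ∈ L¹ the infimum in ρ^f(X) = inf_{s∈ℝ}{f(X−s) − s} is attained: there exists s* ∈ ℝ with ρ^f(X) = f(X − s*) − s*. -/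
open MeasureTheory Filter Topology

variable {Ω : Type*} [MeasurableSpace Ω]

/-- The trivial partition `{Ω}`. -/
noncomputable def trivPartition (μ : Measure Ω) [IsProbabilityMeasure μ] : FinPartition μ where
  parts := {Set.univ}
  measSet A hA := by
    simp only [Finset.mem_singleton] at hA; subst hA; exact MeasurableSet.univ
  pairwiseDisj A hA B hB hAB := by
    simp only [Finset.mem_singleton] at hA hB; subst hA; subst hB; exact absurd rfl hAB
  cover := by simp
  pos A hA := by
    simp only [Finset.mem_singleton] at hA; subst hA; simp

lemma pCondExp_triv (μ : Measure Ω) [IsProbabilityMeasure μ] (Y : Ω → ℝ) :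
    pCondExp μ (trivPartition μ) Y = fun _ => ∫ ω, Y ω ∂μ := by
  funext ω
  simp [pCondExp, trivPartition, Measure.restrict_univ]

lemma ereal_shift (a : EReal) (m t : ℝ) :
    a + ((m - t : ℝ) : EReal) - (m : EReal) = a - (t : EReal) := by
  rw [sub_eq_add_neg, sub_eq_add_neg, add_assoc, ← EReal.coe_neg, ← EReal.coe_add]
  rw [show m + -t + -m = -t by ring, EReal.coe_neg, ← sub_eq_add_neg]

/-- If `f : L¹ → (-∞,∞]` is dilatation monotone, `‖·‖₁` lower
semicontinuous and coercive (`f(s·1) + s → ∞` as `|s| → ∞`), then the infimum in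
`ρ^f(X) = inf_s {f(X - s) - s}` is attained for every `X ∈ L¹`. -/

theorem stmt12 (μ : Measure Ω) [IsProbabilityMeasure μ]
    (f : (Ω → ℝ) → EReal) (hbot : ∀ X : Ω → ℝ, f X ≠ ⊥)
    (hdil : ∀ X : Ω → ℝ, Integrable X μ → ∀ π : FinPartition μ,
      f (pCondExp μ π X) ≤ f X)
    (hlsc : ∀ (Xn : ℕ → Ω → ℝ) (X : Ω → ℝ), (∀ n, Integrable (Xn n) μ) →
      Integrable X μ →
      Tendsto (fun n => ∫ ω, |Xn n ω - X ω| ∂μ) atTop (nhds 0) →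
      f X ≤ liminf (fun n => f (Xn n)) atTop)
    (hcoercive : ∀ M : ℝ, ∃ N : ℝ, ∀ s : ℝ, N ≤ |s| →
      (M : EReal) ≤ f (fun _ => s) + (s : EReal)) :
    ∀ X : Ω → ℝ, Integrable X μ →
      ∃ s : ℝ, (⨅ t : ℝ, f (fun ω => X ω - t) - (t : EReal)) =
        f (fun ω => X ω - s) - (s : EReal) := by
  intro X hX
  set m := ∫ ω, X ω ∂μ with hm
  have hconst : ∀ (Y : Ω → ℝ), Integrable Y μ → f (fun _ => ∫ ω, Y ω ∂μ) ≤ f Y := by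
    intro Y hY
    have h := hdil Y hY (trivPartition μ)
    rwa [pCondExp_triv μ Y] at h
  have key : ∀ t : ℝ, f (fun _ => m - t) ≤ f (fun ω => X ω - t) := by
    intro t
    have h1 := hconst (fun ω => X ω - t) (hX.sub (integrable_const t))
    have h2 : ∫ ω, (X ω - t) ∂μ = m - t := by
      rw [integral_sub hX (integrable_const t), integral_const]; simp [hm]
    rwa [h2] at h1
  set g := fun t : ℝ => f (fun ω => X ω - t) - (t : EReal) with hgdef
  have hgbot : ∀ t : ℝ, g t ≠ ⊥ := by
    intro t h
    have h2 : f (fun ω => X ω - t) - (t : EReal) = ⊥ := h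
    have h4 := EReal.sub_add_cancel (a := f (fun ω => X ω - t)) (b := t)
    rw [h2] at h4
    refine hbot (fun ω => X ω - t) ?_
    rw [← h4]
    simp
  have hlscg : ∀ (t : ℕ → ℝ) (s : ℝ), Tendsto t atTop (nhds s) →
      f (fun ω => X ω - s) ≤ liminf (fun k => f (fun ω => X ω - t k)) atTop := by
    intro t s hts
    refine hlsc (fun k ω => X ω - t k) (fun ω => X ω - s)
      (fun k => hX.sub (integrable_const _)) (hX.sub (integrable_const s)) ?_
    have heq : ∀ k, ∫ ω, |(X ω - t k) - (X ω - s)| ∂μ = |s - t k| := by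
      intro k
      have : (fun ω => |(X ω - t k) - (X ω - s)|) = fun _ : Ω => |s - t k| := by
        funext ω; congr 1; ring
      rw [this, integral_const]; simp
    rw [show (fun n => ∫ ω, |(X ω - t n) - (X ω - s)| ∂μ) = fun n => |s - t n| from
      funext heq]
    have h0 : Tendsto (fun n => s - t n) atTop (nhds (s - s)) :=
      tendsto_const_nhds.sub hts
    rw [sub_self] at h0
    simpa using h0.abs
  by_cases hI : (⨅ t : ℝ, g t) = ⊤
  · exact ⟨0, le_antisymm (iInf_le _ 0) (by rw [hI]; exact le_top)⟩
  obtain ⟨t₀, ht₀⟩ : ∃ t₀ : ℝ, g t₀ < ⊤ := iInf_lt_iff.1 (lt_top_iff_ne_top.2 hI)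
  set M : ℝ := (g t₀).toReal + 1 with hM
  have hgt₀ : g t₀ ≤ (M : EReal) := by
    have h1 : g t₀ = ((g t₀).toReal : EReal) := (EReal.coe_toReal ht₀.ne (hgbot t₀)).symm
    rw [h1]
    exact_mod_cast (by linarith : (g t₀).toReal ≤ M)
  obtain ⟨N, hN⟩ := hcoercive (M + m)
  have hout : ∀ t : ℝ, N ≤ |m - t| → g t₀ ≤ g t := by
    intro t ht
    have h1 := hN (m - t) ht
    have h2 : (M : EReal) ≤ f (fun _ => m - t) + ((m - t : ℝ) : EReal) - (m : EReal) := by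
      rw [EReal.le_sub_iff_add_le (Or.inl (EReal.coe_ne_bot m))
        (Or.inl (EReal.coe_ne_top m)), ← EReal.coe_add]
      exact h1
    rw [ereal_shift] at h2
    calc g t₀ ≤ (M : EReal) := hgt₀
      _ ≤ f (fun _ => m - t) - (t : EReal) := h2
      _ ≤ g t := EReal.sub_le_sub (key t) le_rfl
  set N' : ℝ := max N |m - t₀| with hN'
  set K : Set ℝ := Set.Icc (m - N') (m + N') with hK
  have ht₀K : t₀ ∈ K := by
    have habs : |m - t₀| ≤ N' := le_max_right _ _
    obtain ⟨ha, hb⟩ := abs_le.1 habs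
    exact ⟨by linarith, by linarith⟩
  have houtK : ∀ t : ℝ, t ∉ K → g t₀ ≤ g t := by
    intro t htK
    apply hout
    have hNN' : N ≤ N' := le_max_left _ _
    rw [hK, Set.mem_Icc, not_and_or, not_le, not_le] at htK
    rcases htK with h | h
    · calc N ≤ N' := hNN'
        _ ≤ m - t := by linarith
        _ ≤ |m - t| := le_abs_self _
    · calc N ≤ N' := hNN'
        _ ≤ t - m := by linarith
        _ ≤ |m - t| := by rw [abs_sub_comm]; exact le_abs_self _
  have hKne : (g '' K).Nonempty := ⟨g t₀, Set.mem_image_of_mem _ ht₀K⟩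
  obtain ⟨u, -, hu_tendsto, hu_mem⟩ := exists_seq_tendsto_sInf hKne (OrderBot.bddBelow _)
  simp only [Set.mem_image] at hu_mem
  choose t htK htg using hu_mem
  obtain ⟨s, hsK, φ, hφmono, hφtendsto⟩ := (isCompact_Icc).tendsto_subseq htK
  have hgu : Tendsto (fun k => g (t (φ k))) atTop (nhds (sInf (g '' K))) := by
    have h1 : (fun k => g (t (φ k))) = u ∘ φ := funext fun k => htg (φ k)
    rw [h1]
    exact hu_tendsto.comp hφmono.tendsto_atTop
  have hf_eq : (fun k => f (fun ω => X ω - t (φ k)))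
      = fun k => g (t (φ k)) + ((t (φ k) : ℝ) : EReal) :=
    funext fun k => EReal.sub_add_cancel.symm
  have htend2 : Tendsto (fun k => g (t (φ k)) + ((t (φ k) : ℝ) : EReal)) atTop
      (nhds (sInf (g '' K) + (s : EReal))) := by
    have hpair : Tendsto (fun k => (g (t (φ k)), ((t (φ k) : ℝ) : EReal))) atTop
        (nhds (sInf (g '' K), (s : EReal))) :=
      hgu.prodMk_nhds (EReal.tendsto_coe.2 hφtendsto)
    exact (EReal.continuousAt_add (p := (sInf (g '' K), (s : EReal)))
      (Or.inr (EReal.coe_ne_bot s)) (Or.inr (EReal.coe_ne_top s))).tendsto.comp hpair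
  have hliminf : f (fun ω => X ω - s) ≤ sInf (g '' K) + (s : EReal) := by
    refine le_trans (hlscg (fun k => t (φ k)) s hφtendsto) ?_
    rw [hf_eq]
    exact le_of_eq htend2.liminf_eq
  have hgs_le : g s ≤ sInf (g '' K) := by
    show f (fun ω => X ω - s) - (s : EReal) ≤ sInf (g '' K)
    rw [EReal.sub_le_iff_le_add (Or.inl (EReal.coe_ne_bot s))
      (Or.inl (EReal.coe_ne_top s))]
    exact hliminf
  have hmain : ∀ t' : ℝ, g s ≤ g t' := by
    intro t'
    by_cases ht' : t' ∈ K
    · exact hgs_le.trans (sInf_le (Set.mem_image_of_mem _ ht'))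
    · exact hgs_le.trans ((sInf_le (Set.mem_image_of_mem _ ht₀K)).trans (houtK t' ht'))
  exact ⟨s, le_antisymm (iInf_le _ s) (le_iInf hmain)⟩
end

section
/- Let G be a real-valued Orlicz function and L^G the corresponding Orlicz space inside L¹. Then the set 𝓧 = { X ∈ L¹ : (s − X)⁺ ∈ L^G for all s ∈ ℝ } equals L^G + L¹₊, the set of sums of an element of L^G and a nonnegative integrable random variable. -/
open MeasureTheory Filter Topology
open scoped ENNReal

variable {Ω : Type*} [MeasurableSpace Ω]

/-- The properties of a real-valued Orlicz function `G : [0,∞) → [0,∞)`: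
left-continuous, convex, `G(0) = 0 = lim_{x→0⁺} G(x)`, nonnegative and increasing on
`[0,∞)`, with `G(x) → ∞` as `x → ∞`. -/
structure IsOrlicz (G : ℝ → ℝ) : Prop where
  zero : G 0 = 0
  nonneg : ∀ x, 0 ≤ x → 0 ≤ G x
  convex : ConvexOn ℝ (Set.Ici (0 : ℝ)) G
  mono : MonotoneOn G (Set.Ici (0 : ℝ))
  left_cont : ∀ x : ℝ, 0 < x → Tendsto G (nhdsWithin x (Set.Iio x)) (nhds (G x))
  zero_lim : Tendsto G (nhdsWithin 0 (Set.Ioi 0)) (nhds 0)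
  top_lim : Tendsto G atTop atTop

/-- Membership in the Orlicz space `L^G ⊆ L¹`:
`X ∈ L¹` and `E[G(c|X|)] < ∞` for some `c > 0`. -/
def MemLG {Ω : Type*} [MeasurableSpace Ω] (μ : Measure Ω) (G : ℝ → ℝ) (X : Ω → ℝ) : Prop :=
  Integrable X μ ∧ ∃ c : ℝ, 0 < c ∧ (∫⁻ ω, ENNReal.ofReal (G (c * |X ω|)) ∂μ) < ⊤

/-- The Luxemburg norm `‖Z‖_G = inf{λ > 0 : E[G(|Z|/λ)] ≤ 1}`, valued in `[0,∞]`
(`∞` if no such `λ` exists, i.e. if `Z ∉ L^G`). -/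
noncomputable def luxNorm {Ω : Type*} [MeasurableSpace Ω] (μ : Measure Ω) (G : ℝ → ℝ)
    (Z : Ω → ℝ) : ℝ≥0∞ :=
  sInf {l : ℝ≥0∞ | 0 < l ∧ l ≠ ⊤ ∧
    (∫⁻ ω, ENNReal.ofReal (G (|Z ω| / l.toReal)) ∂μ) ≤ 1}

lemma IsOrlicz.monoMax {G : ℝ → ℝ} (hG : IsOrlicz G) :
    Monotone (fun x => G (max x 0)) := fun x y hxy =>
  hG.mono (le_max_right x 0) (le_max_right y 0) (max_le_max hxy le_rfl)

lemma memLG_mono {μ : Measure Ω} {G : ℝ → ℝ} (hG : IsOrlicz G)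
    {Z Y : Ω → ℝ} (hZ : MemLG μ G Z) (hY : Integrable Y μ)
    (h : ∀ ω, |Y ω| ≤ |Z ω|) : MemLG μ G Y := by
  obtain ⟨hZi, c, hc, hfin⟩ := hZ
  refine ⟨hY, c, hc, lt_of_le_of_lt (lintegral_mono fun ω => ?_) hfin⟩
  exact ENNReal.ofReal_le_ofReal <| hG.mono (Set.mem_Ici.mpr (by positivity))
    (Set.mem_Ici.mpr (by positivity)) (by nlinarith [h ω, abs_nonneg (Y ω)])

lemma memLG_const (μ : Measure Ω) [IsFiniteMeasure μ] {G : ℝ → ℝ} (hG : IsOrlicz G) (s : ℝ) :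
    MemLG μ G (fun _ => s) := by
  refine ⟨integrable_const s, 1, one_pos, ?_⟩
  rw [lintegral_const]
  exact ENNReal.mul_lt_top ENNReal.ofReal_lt_top (measure_lt_top μ _)

lemma memLG_add {μ : Measure Ω} {G : ℝ → ℝ} (hG : IsOrlicz G)
    {Y₁ Y₂ Z : Ω → ℝ} (h1 : MemLG μ G Y₁) (h2 : MemLG μ G Y₂)
    (hZ : Integrable Z μ) (h : ∀ ω, |Z ω| ≤ |Y₁ ω| + |Y₂ ω|) : MemLG μ G Z := by
  obtain ⟨hi1, c1, hc1, hf1⟩ := h1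
  obtain ⟨hi2, c2, hc2, hf2⟩ := h2
  have hcm : (0:ℝ) < min c1 c2 := lt_min hc1 hc2
  refine ⟨hZ, min c1 c2 / 2, by positivity, ?_⟩
  have key : ∀ ω, G (min c1 c2 / 2 * |Z ω|) ≤ G (c1 * |Y₁ ω|) + G (c2 * |Y₂ ω|) := by
    intro ω
    have ha : c1 * |Y₁ ω| ∈ Set.Ici (0:ℝ) := Set.mem_Ici.mpr (by positivity)
    have hb : c2 * |Y₂ ω| ∈ Set.Ici (0:ℝ) := Set.mem_Ici.mpr (by positivity)
    have hcx := hG.convex.2 ha hb (by norm_num : (0:ℝ) ≤ 1/2) (by norm_num : (0:ℝ) ≤ 1/2)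
      (by norm_num)
    simp only [smul_eq_mul] at hcx
    have h1' : G (min c1 c2 / 2 * |Z ω|) ≤ G (1/2 * (c1 * |Y₁ ω|) + 1/2 * (c2 * |Y₂ ω|)) := by
      apply hG.mono (Set.mem_Ici.mpr (by positivity))
        (Set.mem_Ici.mpr (by nlinarith [Set.mem_Ici.mp ha, Set.mem_Ici.mp hb]))
      nlinarith [h ω, abs_nonneg (Z ω), abs_nonneg (Y₁ ω), abs_nonneg (Y₂ ω),
        min_le_left c1 c2, min_le_right c1 c2, hcm]
    have hGa := hG.nonneg _ ha
    have hGb := hG.nonneg _ hb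
    nlinarith [hcx, h1']
  have hmeas1 : AEMeasurable (fun ω => ENNReal.ofReal (G (c1 * |Y₁ ω|))) μ := by
    have : AEMeasurable (fun ω => c1 * |Y₁ ω|) μ :=
      ((measurable_abs.comp_aemeasurable hi1.aestronglyMeasurable.aemeasurable).const_mul c1)
    have hcomp : AEMeasurable (fun ω => G (max (c1 * |Y₁ ω|) 0)) μ :=
      (hG.monoMax.measurable).comp_aemeasurable this
    refine ENNReal.measurable_ofReal.comp_aemeasurable ?_
    convert hcomp using 2 with ω
    rw [max_eq_left (by have := abs_nonneg (Y₁ ω); positivity)]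
  calc (∫⁻ ω, ENNReal.ofReal (G (min c1 c2 / 2 * |Z ω|)) ∂μ)
      ≤ ∫⁻ ω, ENNReal.ofReal (G (c1 * |Y₁ ω|)) + ENNReal.ofReal (G (c2 * |Y₂ ω|)) ∂μ := by
        refine lintegral_mono fun ω => ?_
        rw [← ENNReal.ofReal_add (hG.nonneg _ (by have := abs_nonneg (Y₁ ω); positivity))
          (hG.nonneg _ (by have := abs_nonneg (Y₂ ω); positivity))]
        exact ENNReal.ofReal_le_ofReal (key ω)
    _ = (∫⁻ ω, ENNReal.ofReal (G (c1 * |Y₁ ω|)) ∂μ)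
        + ∫⁻ ω, ENNReal.ofReal (G (c2 * |Y₂ ω|)) ∂μ := lintegral_add_left' hmeas1 _
    _ < ⊤ := ENNReal.add_lt_top.mpr ⟨hf1, hf2⟩

/-- For a real-valued Orlicz function `G`,
`{X ∈ L¹ : (s - X)⁺ ∈ L^G for all s ∈ ℝ} = L^G + L¹₊`. -/
theorem stmt14 (μ : Measure Ω) [IsProbabilityMeasure μ]
    (G : ℝ → ℝ) (hG : IsOrlicz G) :
    {X : Ω → ℝ | Integrable X μ ∧
        ∀ s : ℝ, MemLG μ G (fun ω => max (s - X ω) 0)} =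
      {X : Ω → ℝ | ∃ Y W : Ω → ℝ, MemLG μ G Y ∧ Integrable W μ ∧
        (∀ ω, 0 ≤ W ω) ∧ X = Y + W} := by
  ext X
  simp only [Set.mem_setOf_eq]
  constructor
  · rintro ⟨hX, hs⟩
    refine ⟨fun ω => min (X ω) 0, fun ω => max (X ω) 0, ?_, hX.pos_part, fun ω => le_max_right _ _, ?_⟩
    · refine memLG_mono hG (hs 0) ?_ fun ω => ?_
      · have : (fun ω => min (X ω) 0) = fun ω => -(max (-X ω) 0) := by
          funext ω; rcases le_total (X ω) 0 with h | h
          · rw [min_eq_left h, max_eq_left (neg_nonneg.mpr h), neg_neg]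
          · rw [min_eq_right h, max_eq_right (neg_nonpos.mpr h), neg_zero]
        rw [this]; exact hX.neg.pos_part.neg
      · rcases le_total (X ω) 0 with h | h
        · rw [min_eq_left h, zero_sub, max_eq_left (neg_nonneg.mpr h), abs_of_nonpos h,
            abs_of_nonneg (neg_nonneg.mpr h)]
        · rw [min_eq_right h, abs_zero]; exact abs_nonneg _
    · funext ω
      rcases le_total (X ω) 0 with h | h <;>
        simp [min_eq_left, min_eq_right, max_eq_left, max_eq_right, h, Pi.add_apply]
  · rintro ⟨Y, W, hY, hW, hWpos, rfl⟩
    have hXint : Integrable (Y + W) μ := hY.1.add hW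
    refine ⟨hXint, fun s => ?_⟩
    have hint : Integrable (fun ω => max (s - (Y + W) ω) 0) μ :=
      ((integrable_const s).sub hXint).pos_part
    refine memLG_add hG (memLG_const μ hG s) hY hint fun ω => ?_
    rw [abs_of_nonneg (le_max_right _ 0)]
    refine max_le ?_ (by positivity)
    have h1 : s - (Y + W) ω ≤ s - Y ω := by simp [Pi.add_apply]; linarith [hWpos ω]
    calc s - (Y + W) ω ≤ s - Y ω := h1
      _ ≤ |s| + |Y ω| := by
          have := neg_abs_le (Y ω); have := le_abs_self s; linarith
end

section
/- Let H: ℝ → [0, ∞) be increasing and convex, G an Orlicz function with Luxemburg norm ‖·‖_G, and F̄: [0, ∞] → (−∞, ∞] increasing with F̄(∞) = ∞. Define f(X) = F̄(‖H(−X)‖_G) for X ∈ L¹ (with ‖H(−X)‖_G = ∞ if H(−X) ∉ L^G). Then f is dilatation monotone: f(E[X|π]) ≤ f(X) for every X ∈ L¹ and every finite measurable partition π with positive-probability members. -/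
open MeasureTheory Filter Topology
open scoped ENNReal

variable {Ω : Type*} [MeasurableSpace Ω]

/-- `f(X) = F̄(‖H(-X)‖_G)` is dilatation monotone on `L¹`, for `H` increasing
convex nonnegative, `G` an Orlicz function and `F̄ : [0,∞] → (-∞,∞]` increasing with
`F̄(∞) = ∞`. -/
theorem stmt15 (μ : Measure Ω) [IsProbabilityMeasure μ]
    (G : ℝ → ℝ) (hG : IsOrlicz G)
    (H : ℝ → ℝ) (hHmono : Monotone H) (hHconv : ConvexOn ℝ Set.univ H)
    (hHnonneg : ∀ x, 0 ≤ H x)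
    (F : ℝ≥0∞ → EReal) (hFmono : Monotone F) (hFtop : F ⊤ = ⊤)
    (hFbot : ∀ x, F x ≠ ⊥) :
    ∀ (X : Ω → ℝ), Integrable X μ → ∀ π : FinPartition μ,
      F (luxNorm μ G (fun ω => H (-(pCondExp μ π X ω)))) ≤
        F (luxNorm μ G (fun ω => H (-X ω))) := by

  intro X hX π
  apply hFmono
  unfold luxNorm
  apply sInf_le_sInf
  rintro l ⟨hl0, hlt, hl1⟩
  refine ⟨hl0, hlt, ?_⟩
  set t := l.toReal with ht_def
  have ht : 0 < t := ENNReal.toReal_pos hl0.ne' hlt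
  -- the extended function Gext y = G (max y 0)
  set Gext : ℝ → ℝ := fun y => G (max y 0) with hGext_def
  have himg : (fun x : ℝ => max x 0) '' Set.univ = Set.Ici 0 := by
    ext x
    constructor
    · rintro ⟨y, -, rfl⟩; exact Set.mem_Ici.mpr (le_max_right y 0)
    · intro hx; exact ⟨x, trivial, max_eq_left hx⟩
  have hGextmono : Monotone Gext := fun x y hxy =>
    hG.mono (Set.mem_Ici.mpr (le_max_right x 0)) (Set.mem_Ici.mpr (le_max_right y 0)) (max_le_max hxy le_rfl)
  have hGextconv : ConvexOn ℝ Set.univ Gext := by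
    have hmax : ConvexOn ℝ Set.univ (fun x : ℝ => max x 0) :=
      (convexOn_id convex_univ).sup (convexOn_const 0 convex_univ)
    exact ConvexOn.comp (himg ▸ hG.convex) hmax (himg ▸ hG.mono)
  -- the composed function Φ
  set Φ : ℝ → ℝ := fun x => Gext (H x / t) with hPhi_def
  have hΦnonneg : ∀ x, 0 ≤ Φ x := fun x => hG.nonneg _ (le_max_right _ _)
  have hΦconv : ConvexOn ℝ Set.univ Φ := by
    refine ⟨convex_univ, fun x _ y _ a b ha hb hab => ?_⟩
    calc Φ (a • x + b • y) = Gext (H (a • x + b • y) / t) := rfl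
      _ ≤ Gext ((a • H x + b • H y) / t) :=
          hGextmono ((div_le_div_iff_of_pos_right ht).mpr
            (hHconv.2 (Set.mem_univ x) (Set.mem_univ y) ha hb hab))
      _ = Gext (a • (H x / t) + b • (H y / t)) := by
          rw [smul_eq_mul, smul_eq_mul, smul_eq_mul, smul_eq_mul]; ring_nf
      _ ≤ a • Φ x + b • Φ y :=
          hGextconv.2 (Set.mem_univ _) (Set.mem_univ _) ha hb hab
  have hΦcont : Continuous Φ := by
    have := hΦconv.continuousOn_interior
    rw [interior_univ] at this
    exact continuousOn_univ.mp this
  have hΦmeas : Measurable Φ := hΦcont.measurable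
  -- rewrite integrand: G (|H y| / t) = Φ y
  have hinteg : ∀ y : ℝ, ENNReal.ofReal (G (|H y| / t)) = ENNReal.ofReal (Φ y) := by
    intro y
    rw [abs_of_nonneg (hHnonneg y)]
    congr 1
    simp only [hPhi_def, hGext_def]
    rw [max_eq_left (div_nonneg (hHnonneg y) ht.le)]
  simp only [hinteg] at hl1 ⊢
  -- decompose the integral over the partition
  have hpart : ∀ f : Ω → ℝ≥0∞,
      ∫⁻ ω, f ω ∂μ = ∑ A ∈ π.parts, ∫⁻ ω in A, f ω ∂μ := by
    intro f
    have h1 : Set.PairwiseDisjoint (↑π.parts : Set (Set Ω)) id := by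
      intro A hA B hB hAB
      exact π.pairwiseDisj A hA B hB hAB
    rw [← setLIntegral_univ (μ := μ), ← π.cover]
    exact lintegral_biUnion_finset h1 (fun A hA => π.measSet A hA) f
  rw [hpart] at hl1 ⊢
  -- compare per part
  refine le_trans (Finset.sum_le_sum fun A hA => ?_) hl1
  have hAm : MeasurableSet A := π.measSet A hA
  have hApos : 0 < μ A := π.pos A hA
  have hAfin : μ A ≠ ⊤ := (measure_lt_top μ A).ne
  haveI : NeZero (μ.restrict A) :=
    ⟨Measure.measure_univ_ne_zero.mp (by rw [Measure.restrict_apply_univ]; exact hApos.ne')⟩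
  set c : ℝ := (∫ x in A, X x ∂μ) / (μ A).toReal with hc_def
  -- pCondExp equals c on A
  have hval : ∀ ω ∈ A, pCondExp μ π X ω = c := by
    intro ω hω
    unfold pCondExp
    rw [Finset.sum_eq_single A]
    · rw [Set.indicator_of_mem hω]
    · intro B hB hBA
      refine Set.indicator_of_notMem (fun hωB => ?_) _
      exact Set.disjoint_left.mp (π.pairwiseDisj B hB A hA hBA) hωB hω
    · intro h; exact absurd hA h
  -- integrability of Φ ∘ (-X) on A
  have hXA : Integrable X (μ.restrict A) := hX.restrict
  have hΦXm : AEStronglyMeasurable (fun ω => Φ (-X ω)) (μ.restrict A) :=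
    (hΦcont.comp_aestronglyMeasurable hXA.1.neg)
  have hlA : ∫⁻ ω in A, ENNReal.ofReal (Φ (-X ω)) ∂μ ≤ 1 := by
    refine le_trans ?_ hl1
    exact Finset.single_le_sum (f := fun B => ∫⁻ ω in B, ENNReal.ofReal (Φ (-X ω)) ∂μ)
      (fun B _ => by simp) hA
  have hΦXi : Integrable (fun ω => Φ (-X ω)) (μ.restrict A) := by
    refine ⟨hΦXm, ?_⟩
    rw [hasFiniteIntegral_iff_norm]
    calc ∫⁻ ω in A, ENNReal.ofReal ‖Φ (-X ω)‖ ∂μ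
        = ∫⁻ ω in A, ENNReal.ofReal (Φ (-X ω)) ∂μ := by
          refine lintegral_congr fun ω => by rw [Real.norm_eq_abs, abs_of_nonneg (hΦnonneg _)]
      _ ≤ 1 := hlA
      _ < ⊤ := by norm_num
  -- Jensen
  have hjensen : Φ (⨍ ω in A, (-X ω) ∂μ) ≤ ⨍ ω in A, Φ (-X ω) ∂μ :=
    hΦconv.map_average_le hΦcont.continuousOn isClosed_univ
      (Filter.Eventually.of_forall fun _ => Set.mem_univ _) hXA.neg hΦXi
  have havg : ⨍ ω in A, (-X ω) ∂μ = -c := by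
    rw [average_eq, integral_neg, measureReal_def, Measure.restrict_apply_univ, smul_eq_mul, hc_def]
    ring
  -- now the chain of (in)equalities
  calc ∫⁻ ω in A, ENNReal.ofReal (Φ (-pCondExp μ π X ω)) ∂μ
      = ∫⁻ _ in A, ENNReal.ofReal (Φ (-c)) ∂μ := by
        refine setLIntegral_congr_fun hAm (fun ω hω => ?_)
        rw [hval ω hω]
    _ = ENNReal.ofReal (Φ (-c)) * μ A := setLIntegral_const _ _
    _ ≤ ENNReal.ofReal (⨍ ω in A, Φ (-X ω) ∂μ) * μ A := by
        gcongr
        exact havg ▸ hjensen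
    _ = ENNReal.ofReal (∫ ω in A, Φ (-X ω) ∂μ) := by
        rw [average_eq, measureReal_def, Measure.restrict_apply_univ, smul_eq_mul, mul_comm,
          ENNReal.ofReal_mul (inv_nonneg.mpr ENNReal.toReal_nonneg), ← mul_assoc,
          ENNReal.ofReal_inv_of_pos (ENNReal.toReal_pos hApos.ne' hAfin),
          ENNReal.ofReal_toReal hAfin, ENNReal.mul_inv_cancel hApos.ne' hAfin, one_mul]
    _ = ∫⁻ ω in A, ENNReal.ofReal (Φ (-X ω)) ∂μ :=
        ofReal_integral_eq_lintegral_ofReal hΦXi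
          (Filter.Eventually.of_forall fun ω => hΦnonneg _)
end

section
/- Let H: ℝ → [0, ∞) be increasing, convex and continuous, G a real-valued Orlicz function, and F: [0,∞) → (−∞, ∞] left-continuous, increasing, convex, not identically ∞, with F(x) → ∞ as x → ∞; extend F to F̄ with F̄(∞) = ∞. Then f(X) = F̄(‖H(−X)‖_G) is ‖·‖₁ lower semicontinuous on L¹: every sublevel set {X ∈ L¹ : f(X) ≤ λ} is closed in L¹-norm. -/
open MeasureTheory Filter Topology
open scoped ENNReal

variable {Ω : Type*} [MeasurableSpace Ω]

/-- `f(X) = F̄(‖H(-X)‖_G)` is `‖·‖₁` lower semicontinuous on `L¹`, for `H`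
increasing convex continuous nonnegative, `G` a real-valued Orlicz function and
`F : [0,∞) → (-∞,∞]` left-continuous, increasing, convex, not identically `∞`, with
`F(x) → ∞` as `x → ∞`, extended by `F̄(∞) = ∞`. -/
theorem stmt16 (μ : Measure Ω) [IsProbabilityMeasure μ]
    (G : ℝ → ℝ) (hG : IsOrlicz G)
    (H : ℝ → ℝ) (hHmono : Monotone H) (hHconv : ConvexOn ℝ Set.univ H)
    (hHcont : Continuous H) (hHnonneg : ∀ x, 0 ≤ H x)
    (F : ℝ → EReal) (hFbot : ∀ x : ℝ, 0 ≤ x → F x ≠ ⊥)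
    (hFmono : MonotoneOn F (Set.Ici (0 : ℝ)))
    (hFconv : ∀ x ∈ Set.Ici (0:ℝ), ∀ y ∈ Set.Ici (0:ℝ), ∀ a b : ℝ,
      0 ≤ a → 0 ≤ b → a + b = 1 →
      F (a * x + b * y) ≤ (a : EReal) * F x + (b : EReal) * F y)
    (hFlc : ∀ x : ℝ, 0 < x → Tendsto F (nhdsWithin x (Set.Iio x)) (nhds (F x)))
    (hFproper : ∃ x : ℝ, 0 ≤ x ∧ F x ≠ ⊤)
    (hFtop : Tendsto F atTop (nhds (⊤ : EReal)))
    -- the extension `F̄` of `F` to `[0,∞]` with `F̄(∞) = ∞`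
    (Fbar : ℝ≥0∞ → EReal)
    (hFbar : ∀ l : ℝ≥0∞, Fbar l = if l = ⊤ then ⊤ else F l.toReal) :
    ∀ (c : ℝ) (Xn : ℕ → Ω → ℝ) (X : Ω → ℝ),
      (∀ n, Integrable (Xn n) μ) → Integrable X μ →
      (∀ n, Fbar (luxNorm μ G (fun ω => H (-(Xn n ω)))) ≤ (c : EReal)) →
      Tendsto (fun n => ∫ ω, |Xn n ω - X ω| ∂μ) atTop (nhds 0) →
      Fbar (luxNorm μ G (fun ω => H (-X ω))) ≤ (c : EReal) := by
  intro c Xn X hXnInt hXInt hbound hL1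
  -- `G` is continuous on `[0, ∞)`
  have hGIoi : ContinuousOn G (Set.Ioi 0) :=
    (hG.convex.subset Set.Ioi_subset_Ici_self (convex_Ioi 0)).continuousOn isOpen_Ioi
  have hGcont : ContinuousOn G (Set.Ici 0) := by
    intro x hx
    rcases eq_or_lt_of_le (Set.mem_Ici.mp hx : (0:ℝ) ≤ x) with h0 | h0
    · subst h0
      unfold ContinuousWithinAt
      rw [show Set.Ici (0:ℝ) = insert 0 (Set.Ioi 0) from Set.Ioi_insert.symm,
        nhdsWithin_insert, Filter.tendsto_sup]
      exact ⟨tendsto_pure_nhds G 0, by simpa [hG.zero] using hG.zero_lim⟩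
    · exact (hGIoi.continuousAt (Ioi_mem_nhds h0)).continuousWithinAt
  -- a continuous extension of `G`
  set g : ℝ → ℝ := fun x => G (max x 0) with hg_def
  have hg_eq : ∀ x : ℝ, 0 ≤ x → g x = G x := fun x hx => by
    simp only [hg_def, max_eq_left hx]
  have hg_cont : Continuous g := by
    rw [continuous_iff_continuousAt]
    intro a
    have h1 : Tendsto (fun x : ℝ => max x 0) (𝓝 a) (𝓝[Set.Ici 0] (max a 0)) :=
      tendsto_nhdsWithin_iff.mpr
        ⟨(continuous_id.max continuous_const).tendsto a,
          Filter.Eventually.of_forall fun x => le_max_right x 0⟩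
    exact (hGcont (max a 0) (le_max_right a 0)).tendsto.comp h1
  have hct : (c : EReal) < ⊤ := EReal.coe_lt_top c
  have ht : ∀ n, luxNorm μ G (fun ω => H (-(Xn n ω))) ≠ ⊤ ∧
      F (luxNorm μ G (fun ω => H (-(Xn n ω)))).toReal ≤ (c:EReal) := by
    intro n
    have h := hbound n
    rw [hFbar] at h
    split_ifs at h with hn
    · exact absurd h (not_le.mpr hct)
    · exact ⟨hn, h⟩
  obtain ⟨M, hM⟩ : ∃ M : ℝ, ∀ x ≥ M, (c:EReal) < F x := by
    simpa using eventually_atTop.mp (hFtop.eventually (Ioi_mem_nhds hct))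
  have htM : ∀ n, luxNorm μ G (fun ω => H (-(Xn n ω))) ≤ ENNReal.ofReal M := by
    intro n
    obtain ⟨hne, hle⟩ := ht n
    have hlt : (luxNorm μ G (fun ω => H (-(Xn n ω)))).toReal < M := by
      by_contra hcon
      push_neg at hcon
      exact absurd hle (not_le.mpr (hM _ hcon))
    exact ((ENNReal.lt_ofReal_iff_toReal_lt hne).mpr hlt).le
  -- `L¹` convergence gives an a.e.-convergent subsequence
  have hL1' : Tendsto (fun n => eLpNorm (Xn n - X) 1 μ) atTop (𝓝 0) := by
    have heq : ∀ n, eLpNorm (Xn n - X) 1 μ = ENNReal.ofReal (∫ ω, |Xn n ω - X ω| ∂μ) := by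
      intro n
      rw [eLpNorm_one_eq_lintegral_enorm,
        ← ofReal_integral_norm_eq_lintegral_enorm ((hXnInt n).sub hXInt)]
      simp [Real.norm_eq_abs]
    have h2 : Tendsto (fun n => ENNReal.ofReal (∫ ω, |Xn n ω - X ω| ∂μ)) atTop
        (𝓝 (ENNReal.ofReal 0)) := (ENNReal.continuous_ofReal.tendsto 0).comp hL1
    simp only [ENNReal.ofReal_zero] at h2
    simpa only [heq] using h2
  obtain ⟨ns, hns_mono, hns_ae⟩ :=
    (tendstoInMeasure_of_tendsto_eLpNorm one_ne_zero
      (fun n => (hXnInt n).aestronglyMeasurable) hXInt.aestronglyMeasurable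
      hL1').exists_seq_tendsto_ae
  set t : ℕ → ℝ≥0∞ := fun k => luxNorm μ G (fun ω => H (-(Xn (ns k) ω))) with ht_def
  set T : ℝ≥0∞ := liminf t atTop with hT_def
  have hT_le : T ≤ ENNReal.ofReal M :=
    liminf_le_of_frequently_le'
      ((Filter.Eventually.of_forall fun k => htM (ns k)).frequently)
  have hT_ne : T ≠ ⊤ := (lt_of_le_of_lt hT_le ENNReal.ofReal_lt_top).ne
  -- the key Fatou-type step
  have hkey : ∀ l : ℝ≥0∞, T < l → l ≠ ⊤ → luxNorm μ G (fun ω => H (-X ω)) ≤ l := by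
    intro l hTl hlne
    have hl0 : 0 < l := lt_of_le_of_lt (zero_le : (0:ℝ≥0∞) ≤ T) hTl
    have hl0' : 0 < l.toReal := ENNReal.toReal_pos hl0.ne' hlne
    have hfreq : ∃ᶠ k in atTop, t k < l := frequently_lt_of_liminf_lt (by isBoundedDefault) hTl
    have hfreq1 : ∃ᶠ k in atTop,
        (∫⁻ ω, ENNReal.ofReal (G (|H (-(Xn (ns k) ω))| / l.toReal)) ∂μ) ≤ 1 := by
      refine hfreq.mono fun k hk => ?_
      obtain ⟨s, hsmem, hsl⟩ := sInf_lt_iff.mp hk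
      obtain ⟨hs0, hsne, hsint⟩ := hsmem
      refine le_trans (lintegral_mono fun ω => ?_) hsint
      apply ENNReal.ofReal_le_ofReal
      have hs0' : 0 < s.toReal := ENNReal.toReal_pos hs0.ne' hsne
      have hsle : s.toReal ≤ l.toReal := ENNReal.toReal_mono hlne hsl.le
      have harg : |H (-(Xn (ns k) ω))| / l.toReal ≤ |H (-(Xn (ns k) ω))| / s.toReal := by
        gcongr
      exact hG.mono (div_nonneg (abs_nonneg _) hl0'.le)
        (div_nonneg (abs_nonneg _) hs0'.le) harg
    set Φ : ℝ → ℝ≥0∞ := fun x => ENNReal.ofReal (g (|H (-x)| / l.toReal)) with hΦ_def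
    have hΦcont : Continuous Φ :=
      ENNReal.continuous_ofReal.comp
        (hg_cont.comp ((continuous_abs.comp (hHcont.comp continuous_neg)).div_const _))
    have hΦeq : ∀ (Y : Ω → ℝ) (ω : Ω),
        Φ (Y ω) = ENNReal.ofReal (G (|H (-(Y ω))| / l.toReal)) := by
      intro Y ω
      rw [hΦ_def]
      simp only
      rw [hg_eq _ (div_nonneg (abs_nonneg _) ENNReal.toReal_nonneg)]
    have hptwise : ∀ᵐ ω ∂μ, Φ (X ω) = liminf (fun k => Φ (Xn (ns k) ω)) atTop := by
      refine hns_ae.mono fun ω hω => ?_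
      exact ((hΦcont.tendsto (X ω)).comp hω).liminf_eq.symm
    have hmeasΦ : ∀ k, AEMeasurable (fun ω => Φ (Xn (ns k) ω)) μ :=
      fun k => hΦcont.measurable.comp_aemeasurable (hXnInt (ns k)).aemeasurable
    have hint : (∫⁻ ω, ENNReal.ofReal (G (|H (-X ω)| / l.toReal)) ∂μ) ≤ 1 := by
      calc (∫⁻ ω, ENNReal.ofReal (G (|H (-X ω)| / l.toReal)) ∂μ)
          = ∫⁻ ω, Φ (X ω) ∂μ := lintegral_congr fun ω => (hΦeq X ω).symm
        _ = ∫⁻ ω, liminf (fun k => Φ (Xn (ns k) ω)) atTop ∂μ := lintegral_congr_ae hptwise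
        _ ≤ liminf (fun k => ∫⁻ ω, Φ (Xn (ns k) ω) ∂μ) atTop := lintegral_liminf_le' hmeasΦ
        _ ≤ 1 := by
            refine liminf_le_of_frequently_le' (hfreq1.mono fun k hk => ?_)
            calc (∫⁻ ω, Φ (Xn (ns k) ω) ∂μ)
                = ∫⁻ ω, ENNReal.ofReal (G (|H (-(Xn (ns k) ω))| / l.toReal)) ∂μ :=
                  lintegral_congr fun ω => hΦeq (Xn (ns k)) ω
              _ ≤ 1 := hk
    exact sInf_le ⟨hl0, hlne, hint⟩
  have hlux : luxNorm μ G (fun ω => H (-X ω)) ≤ T := by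
    refine ENNReal.le_of_forall_pos_le_add fun ε hε _ => ?_
    refine hkey (T + ε) ?_ ?_
    · exact ENNReal.lt_add_right hT_ne (by exact_mod_cast hε.ne')
    · exact ENNReal.add_ne_top.mpr ⟨hT_ne, ENNReal.coe_ne_top⟩
  have hlux_ne : luxNorm μ G (fun ω => H (-X ω)) ≠ ⊤ := (hlux.trans_lt hT_ne.lt_top).ne
  have hFT : F T.toReal ≤ (c : EReal) := by
    rcases eq_or_lt_of_le (zero_le : (0:ℝ≥0∞) ≤ T) with h0 | h0
    · rw [← h0]
      simp only [ENNReal.toReal_zero]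
      refine le_trans (hFmono (Set.mem_Ici.mpr le_rfl)
        (Set.mem_Ici.mpr ENNReal.toReal_nonneg) ENNReal.toReal_nonneg) (ht 0).2
    · have hu : 0 < T.toReal := ENNReal.toReal_pos h0.ne' hT_ne
      have hev : ∀ᶠ s in 𝓝[<] T.toReal, F s ≤ (c:EReal) := by
        filter_upwards [Ioo_mem_nhdsLT_of_mem (⟨hu, le_rfl⟩ : T.toReal ∈ Set.Ioc 0 T.toReal)]
          with s hs
        have h1 : ENNReal.ofReal s < T := by
          rw [← ENNReal.ofReal_toReal hT_ne]
          exact (ENNReal.ofReal_lt_ofReal_iff hu).mpr hs.2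
        obtain ⟨k, hk⟩ := (eventually_lt_of_lt_liminf h1).exists
        have hsk : s ≤ (t k).toReal :=
          ((ENNReal.ofReal_lt_iff_lt_toReal hs.1.le (ht (ns k)).1).mp hk).le
        exact le_trans (hFmono (Set.mem_Ici.mpr hs.1.le)
          (Set.mem_Ici.mpr ENNReal.toReal_nonneg) hsk) (ht (ns k)).2
      exact le_of_tendsto (hFlc T.toReal hu) hev
  rw [hFbar, if_neg hlux_ne]
  refine le_trans (hFmono (Set.mem_Ici.mpr ENNReal.toReal_nonneg)
    (Set.mem_Ici.mpr ENNReal.toReal_nonneg) ?_) hFT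
  exact ENNReal.toReal_mono hT_ne hlux
end

section
/- Let F: [0,∞) → (−∞,∞] and H: ℝ → [0,∞) be increasing convex functions with F not identically ∞, F(x) → ∞ as x → ∞, H(x) → ∞ as x → ∞, and let c > 0. If lim_{s→∞}(F(H(s)) − c·s) = ∞, then lim_{s→∞}(F(H(s)/c) − s) = ∞. -/
open MeasureTheory Filter Topology

variable {Ω : Type*} [MeasurableSpace Ω]

lemma linGrowth {S : Set ℝ} {f : ℝ → ℝ} (hf : ConvexOn ℝ S f) (h0 : (0:ℝ) ∈ S)
    {x₁ x : ℝ} (hx₁S : x₁ ∈ S) (hxS : x ∈ S) (h1 : 0 < x₁) (h2 : x₁ ≤ x) :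
    f 0 + ((f x₁ - f 0)/x₁) * x ≤ f x := by
  have h3 : 0 < x := h1.trans_le h2
  have hsec := hf.secant_mono h0 hx₁S hxS h1.ne' h3.ne' h2
  simp only [sub_zero] at hsec
  rw [div_le_div_iff₀ h1 h3] at hsec
  have : (f x₁ - f 0)/x₁ * x ≤ f x - f 0 := by
    rw [div_mul_eq_mul_div, div_le_iff₀ h1]; nlinarith
  linarith

/-- Let `F : [0,∞) → (-∞,∞]` and `H : ℝ → [0,∞)` be increasing convex with
`F` not identically `∞`, `F(x) → ∞`, `H(x) → ∞`, and `c > 0`. If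
`F(H(s)) - c·s → ∞` as `s → ∞`, then `F(H(s)/c) - s → ∞` as `s → ∞`. -/
theorem stmt18 (F : ℝ → EReal) (H : ℝ → ℝ) (c : ℝ) (hc : 0 < c)
    (hFbot : ∀ x : ℝ, 0 ≤ x → F x ≠ ⊥)
    (hFmono : MonotoneOn F (Set.Ici (0 : ℝ)))
    (hFconv : ∀ x ∈ Set.Ici (0:ℝ), ∀ y ∈ Set.Ici (0:ℝ), ∀ a b : ℝ,
      0 ≤ a → 0 ≤ b → a + b = 1 →
      F (a * x + b * y) ≤ (a : EReal) * F x + (b : EReal) * F y)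
    (hFproper : ∃ x : ℝ, 0 ≤ x ∧ F x ≠ ⊤)
    (hFtop : Tendsto F atTop (nhds (⊤ : EReal)))
    (hHnonneg : ∀ x, 0 ≤ H x) (hHmono : Monotone H)
    (hHconv : ConvexOn ℝ Set.univ H) (hHtop : Tendsto H atTop atTop)
    (hyp : Tendsto (fun s : ℝ => F (H s) - ((c * s : ℝ) : EReal)) atTop
      (nhds (⊤ : EReal))) :
    Tendsto (fun s : ℝ => F (H s / c) - (s : EReal)) atTop (nhds (⊤ : EReal)) := by
  rw [EReal.tendsto_nhds_top_iff_real]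
  intro M
  by_cases htop : ∀ x : ℝ, 0 ≤ x → F x ≠ ⊤
  · -- F is real-valued on [0,∞)
    set f : ℝ → ℝ := fun x => (F x).toReal with hfdef
    have hFcoe : ∀ x : ℝ, 0 ≤ x → F x = ((f x : ℝ) : EReal) := fun x hx =>
      (EReal.coe_toReal (htop x hx) (hFbot x hx)).symm
    have hfmono : MonotoneOn f (Set.Ici (0:ℝ)) := fun x hx y hy hxy =>
      EReal.toReal_le_toReal (hFmono hx hy hxy) (hFbot x hx) (htop y hy)
    have hfconv : ConvexOn ℝ (Set.Ici (0:ℝ)) f := by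
      refine ⟨convex_Ici 0, ?_⟩
      intro x hx y hy a b ha hb hab
      have hx' : (0:ℝ) ≤ x := hx
      have hy' : (0:ℝ) ≤ y := hy
      have hxy0 : (0:ℝ) ≤ a * x + b * y :=
        add_nonneg (mul_nonneg ha hx') (mul_nonneg hb hy')
      have key := hFconv x hx y hy a b ha hb hab
      rw [hFcoe x hx', hFcoe y hy', hFcoe _ hxy0] at key
      simp only [smul_eq_mul]
      have : ((a * f x + b * f y : ℝ) : EReal) =
          (a : EReal) * ((f x : ℝ) : EReal) + (b : EReal) * ((f y : ℝ) : EReal) := by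
        push_cast; rfl
      rw [← this] at key
      exact_mod_cast key
    have hypR : ∀ N : ℝ, ∀ᶠ s in atTop, N < f (H s) - c * s := by
      intro N
      filter_upwards [EReal.tendsto_nhds_top_iff_real.mp hyp N] with s hs
      rw [hFcoe (H s) (hHnonneg s), ← EReal.coe_sub] at hs
      exact_mod_cast hs
    -- a positive secant slope of f from 0
    obtain ⟨x₁, hx₁f, hx₁pos⟩ : ∃ x₁ : ℝ, f 0 < f x₁ ∧ 0 < x₁ := by
      have h1 : ∀ᶠ x in atTop, F 0 < F x :=
        hFtop.eventually (lt_mem_nhds (Ne.lt_top (htop 0 le_rfl)))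
      obtain ⟨x₁, h2, h3⟩ := (h1.and (eventually_gt_atTop (0:ℝ))).exists
      refine ⟨x₁, ?_, h3⟩
      rw [hFcoe 0 le_rfl, hFcoe x₁ h3.le] at h2
      exact_mod_cast h2
    -- a positive secant slope of H from 0
    obtain ⟨s₁, hs₁H, hs₁pos⟩ : ∃ s₁ : ℝ, H 0 < H s₁ ∧ 0 < s₁ :=
      ((hHtop.eventually_gt_atTop (H 0)).and (eventually_gt_atTop (0:ℝ))).exists
    have hKF0 : 0 < (f x₁ - f 0) / x₁ := div_pos (by linarith) hx₁pos
    have hKH0 : 0 < (H s₁ - H 0) / s₁ := div_pos (by linarith) hs₁pos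
    -- every positive secant slope of f from 0 gives a global linear minorant on [0,∞)
    have achF : ∀ x₂ : ℝ, 0 < x₂ → 0 < (f x₂ - f 0) / x₂ →
        ∀ x, 0 ≤ x → ((f x₂ - f 0) / x₂) * x - (((f x₂ - f 0) / x₂) * x₂ + |f 0|) ≤ f x := by
      intro x₂ hx₂ hK x hx
      have hnegabs : -|f 0| ≤ f 0 := neg_abs_le _
      rcases le_or_gt x₂ x with hle | hlt
      · have := linGrowth hfconv (Set.self_mem_Ici) (Set.mem_Ici.mpr hx₂.le)
          (Set.mem_Ici.mpr (hx₂.le.trans hle)) hx₂ hle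
        nlinarith
      · have hfx : f 0 ≤ f x := hfmono Set.self_mem_Ici (Set.mem_Ici.mpr hx) hx
        nlinarith
    have achH : ∀ s₂ : ℝ, 0 < s₂ → 0 < (H s₂ - H 0) / s₂ →
        ∀ s, ((H s₂ - H 0) / s₂) * s - (((H s₂ - H 0) / s₂) * s₂ + |H 0|) ≤ H s := by
      intro s₂ hs₂ hK s
      have hnegabs : -|H 0| ≤ H 0 := neg_abs_le _
      rcases le_or_gt s₂ s with hle | hlt
      · have := linGrowth hHconv (Set.mem_univ _) (Set.mem_univ s₂) (Set.mem_univ s) hs₂ hle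
        nlinarith
      · have hHs : 0 ≤ H s := hHnonneg s
        nlinarith [mul_le_mul_of_nonneg_left hlt.le hK.le, abs_nonneg (H 0)]
    -- the key claim
    have claim : ∃ KF KH CF CH : ℝ, 0 < KF ∧ 0 < KH ∧ c < KF * KH ∧
        (∀ x, 0 ≤ x → KF * x - CF ≤ f x) ∧ (∀ s, KH * s - CH ≤ H s) := by
      by_contra hcon
      push_neg at hcon
      have key : ∀ KF KH : ℝ, 0 < KF → 0 < KH →
          (∃ CF, ∀ x, 0 ≤ x → KF * x - CF ≤ f x) →
          (∃ CH, ∀ s, KH * s - CH ≤ H s) → KF * KH ≤ c := by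
        rintro KF KH h1 h2 ⟨CF, h3⟩ ⟨CH, h4⟩
        by_contra hlt
        push_neg at hlt
        obtain ⟨s0, hs0⟩ := hcon KF KH CF CH h1 h2 hlt h3
        exact absurd (h4 s0) (not_le.mpr hs0)
      set SF : Set ℝ := {K | ∃ x, 0 < x ∧ K = (f x - f 0) / x} with hSF
      set SH : Set ℝ := {K | ∃ s, 0 < s ∧ K = (H s - H 0) / s} with hSH
      have hmemF : (f x₁ - f 0) / x₁ ∈ SF := ⟨x₁, hx₁pos, rfl⟩
      have hmemH : (H s₁ - H 0) / s₁ ∈ SH := ⟨s₁, hs₁pos, rfl⟩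
      -- SF is bounded above
      have hSFb : ∀ K ∈ SF, K ≤ c / ((H s₁ - H 0) / s₁) := by
        rintro K ⟨x₂, hx₂, rfl⟩
        rcases le_or_gt ((f x₂ - f 0) / x₂) 0 with hK | hK
        · exact hK.trans (div_nonneg hc.le hKH0.le)
        · have := key _ _ hK hKH0 ⟨_, achF x₂ hx₂ hK⟩ ⟨_, achH s₁ hs₁pos hKH0⟩
          exact (le_div_iff₀ hKH0).mpr this
      set A : ℝ := sSup SF with hAdef
      have hbddF : BddAbove SF := ⟨_, hSFb⟩
      have hApos : 0 < A := hKF0.trans_le (le_csSup hbddF hmemF)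
      -- SH is bounded above by c / A
      have hSHb : ∀ K ∈ SH, K ≤ c / A := by
        rintro K ⟨s₂, hs₂, rfl⟩
        rcases le_or_gt ((H s₂ - H 0) / s₂) 0 with hK | hK
        · exact hK.trans (div_nonneg hc.le hApos.le)
        · have hAle : A ≤ c / ((H s₂ - H 0) / s₂) := by
            apply csSup_le ⟨_, hmemF⟩
            rintro K' ⟨x₂, hx₂, rfl⟩
            rcases le_or_gt ((f x₂ - f 0) / x₂) 0 with hK' | hK'
            · exact hK'.trans (div_nonneg hc.le hK.le)
            · have := key _ _ hK' hK ⟨_, achF x₂ hx₂ hK'⟩ ⟨_, achH s₂ hs₂ hK⟩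
              exact (le_div_iff₀ hK).mpr this
          rw [le_div_iff₀ hK] at hAle
          rw [le_div_iff₀ hApos]
          linarith [hAle]
      set B : ℝ := sSup SH with hBdef
      have hbddH : BddAbove SH := ⟨_, hSHb⟩
      have hBpos : 0 < B := hKH0.trans_le (le_csSup hbddH hmemH)
      have hAB : A * B ≤ c := by
        have : B ≤ c / A := csSup_le ⟨_, hmemH⟩ hSHb
        rw [le_div_iff₀ hApos] at this
        linarith
      -- upper bounds
      have hfub : ∀ x, 0 ≤ x → f x ≤ f 0 + A * x := by
        intro x hx
        rcases eq_or_lt_of_le hx with h | h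
        · simp [← h]
        · have : (f x - f 0) / x ≤ A := le_csSup hbddF ⟨x, h, rfl⟩
          rw [div_le_iff₀ h] at this
          linarith
      have hHub : ∀ s, 0 ≤ s → H s ≤ H 0 + B * s := by
        intro s hs
        rcases eq_or_lt_of_le hs with h | h
        · simp [← h]
        · have : (H s - H 0) / s ≤ B := le_csSup hbddH ⟨s, h, rfl⟩
          rw [div_le_iff₀ h] at this
          linarith
      -- contradiction
      obtain ⟨s, hs1, hs2⟩ := ((hypR (f 0 + A * H 0)).and (eventually_ge_atTop (0:ℝ))).exists
      have h5 : f (H s) ≤ f 0 + A * (H 0 + B * s) := by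
        have h6 : H s ≤ H 0 + B * s := hHub s hs2
        have h7 : (0:ℝ) ≤ H 0 + B * s := le_trans (hHnonneg s) h6
        exact le_trans (hfmono (Set.mem_Ici.mpr (hHnonneg s)) (Set.mem_Ici.mpr h7) h6)
          (hfub _ h7)
      have h8 : A * (B * s) ≤ c * s := by
        have := mul_le_mul_of_nonneg_right hAB hs2
        nlinarith
      nlinarith
    obtain ⟨KF, KH, CF, CH, hKF, hKH, hcKK, hbF, hbH⟩ := claim
    have hcoef : 0 < KF * KH / c - 1 := by
      rw [sub_pos, lt_div_iff₀ hc]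
      linarith
    have hlin : Tendsto (fun s : ℝ => KF * ((KH * s - CH) / c) - CF - s) atTop atTop := by
      have h1 : Tendsto (fun s : ℝ => (KF * KH / c - 1) * s + (-(KF * CH / c) - CF))
          atTop atTop :=
        tendsto_atTop_add_const_right _ _ (tendsto_id.const_mul_atTop hcoef)
      refine h1.congr (fun s => ?_)
      field_simp
      ring
    filter_upwards [hlin.eventually_gt_atTop M] with s hs
    have hx' : (0:ℝ) ≤ H s / c := div_nonneg (hHnonneg s) hc.le
    have hreal : KF * ((KH * s - CH) / c) - CF - s ≤ f (H s / c) - s := by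
      have h1 : (KH * s - CH) / c ≤ H s / c := by
        gcongr
        exact hbH s
      have h2 : KF * (H s / c) - CF ≤ f (H s / c) := hbF _ hx'
      have h3 : KF * ((KH * s - CH) / c) ≤ KF * (H s / c) :=
        mul_le_mul_of_nonneg_left h1 hKF.le
      linarith
    calc (M : EReal) < ((KF * ((KH * s - CH) / c) - CF - s : ℝ) : EReal) :=
          EReal.coe_lt_coe_iff.mpr hs
      _ ≤ F (H s / c) - (s : EReal) := by
          rw [hFcoe _ hx', ← EReal.coe_sub]
          exact EReal.coe_le_coe_iff.mpr hreal
  · push_neg at htop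
    obtain ⟨x₀, hx₀, hFx₀⟩ := htop
    have hdiv : Tendsto (fun s => H s / c) atTop atTop := hHtop.atTop_div_const hc
    filter_upwards [hdiv.eventually_ge_atTop x₀] with s hs
    have hx' : (0:ℝ) ≤ H s / c := div_nonneg (hHnonneg s) hc.le
    have : F (H s / c) = ⊤ := top_le_iff.mp
      (hFx₀ ▸ hFmono (Set.mem_Ici.mpr hx₀) (Set.mem_Ici.mpr hx') hs)
    rw [this, EReal.top_sub_coe]
    exact EReal.coe_lt_top M
end
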